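/- arXiv:1604.03161 — 10 statements merged into one kernel-verified Lean document; each statement's English description precedes it below -/
import Mathlib

section
/- Let d ≥ 1 and let L ⊂ ℝ^d be a finite set of size n all of whose pairwise distances are distinct. In the full friendly frogs game on L, the first player (Alice) has a winning strategy if n is odd, and the second player (Bob) has a winning strategy if n is even. -/
noncomputable section

/-- Points of `ℝ^d` with the Euclidean norm. -/
abbrev Pt (d : ℕ) := EuclideanSpace ℝ (Fin d)

/-- `L` has all pairwise distances distinct: the distance determines the unordered pair. -/
def DistinctDist {d : ℕ} (L : Set (Pt d)) : Prop :=
  ∀ x ∈ L, ∀ y ∈ L, ∀ z ∈ L, ∀ w ∈ L,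
    x ≠ y → z ≠ w → dist x y = dist z w → (x = z ∧ y = w) ∨ (x = w ∧ y = z)

/-- `L` has no infinite descending chains: no sequence of points of `L` whose consecutive
distances are strictly decreasing. -/
def NoDescChain {d : ℕ} (L : Set (Pt d)) : Prop :=
  ¬ ∃ c : ℕ → Pt d, (∀ n, c n ∈ L) ∧ StrictAnti (fun n => dist (c n) (c (n + 1)))

/-- The move relation of the full friendly frogs game on `L`, including the two opening
placement moves.  Positions are the subsets of `L` of size `0`, `1` or `2` given by the
occupied points. -/
def FullMove {d : ℕ} (L : Set (Pt d)) (p q : Set (Pt d)) : Prop :=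
  (p = ∅ ∧ ∃ x ∈ L, q = {x}) ∨
  (∃ x ∈ L, p = {x} ∧ ∃ y ∈ L, y ≠ x ∧ q = {x, y}) ∨
  (∃ x ∈ L, ∃ y ∈ L, ∃ z ∈ L, x ≠ y ∧ z ≠ x ∧ z ≠ y ∧
    p = {x, y} ∧ q = {x, z} ∧ dist x z < dist x y)

/-- A valid strategy chooses a legal move at every position from which a legal move exists. -/
def ValidStrat {d : ℕ} (L : Set (Pt d)) (σ : Set (Pt d) → Set (Pt d)) : Prop :=
  ∀ p, (∃ q, FullMove L p q) → FullMove L p (σ p)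

/-- The play resulting from strategies `σA` (first player, moving at even times) and `σB`
(second player, moving at odd times), starting from the empty position. `play σA σB n` is
the position after `n` moves. -/
def play {d : ℕ} (σA σB : Set (Pt d) → Set (Pt d)) : ℕ → Set (Pt d)
  | 0 => ∅
  | n + 1 => if Even n then σA (play σA σB n) else σB (play σA σB n)

/-- Alice (the first player) has a winning strategy: she has a valid strategy such that
against every valid strategy of Bob, the play first gets stuck at a position where it is
Bob's turn to move (an odd time). -/
def AliceWins {d : ℕ} (L : Set (Pt d)) : Prop :=
  ∃ σA, ValidStrat L σA ∧ ∀ σB, ValidStrat L σB →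
    ∃ n, Odd n ∧ (∀ q, ¬ FullMove L (play σA σB n) q) ∧
      ∀ m < n, ∃ q, FullMove L (play σA σB m) q

/-- Bob (the second player) has a winning strategy: he has a valid strategy such that
against every valid strategy of Alice, the play first gets stuck at a position where it is
Alice's turn to move (an even time). -/
def BobWins {d : ℕ} (L : Set (Pt d)) : Prop :=
  ∃ σB, ValidStrat L σB ∧ ∀ σA, ValidStrat L σA →
    ∃ n, Even n ∧ (∀ q, ¬ FullMove L (play σA σB n) q) ∧
      ∀ m < n, ∃ q, FullMove L (play σA σB m) q



/-- Properties of a greedy matching `M` on `L`. -/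
def MProps {d : ℕ} (L : Finset (Pt d)) (M : List (Pt d × Pt d)) : Prop :=
  (∀ p ∈ M, p.1 ∈ L ∧ p.2 ∈ L ∧ p.1 ≠ p.2) ∧
  (∀ p ∈ M, ∀ q ∈ M, p ≠ q → p.1 ≠ q.1 ∧ p.1 ≠ q.2 ∧ p.2 ≠ q.1 ∧ p.2 ≠ q.2) ∧
  (Even L.card → ∀ x ∈ L, ∃ p ∈ M, x = p.1 ∨ x = p.2) ∧
  (Odd L.card → ∃ u ∈ L, ∀ p ∈ M, u ≠ p.1 ∧ u ≠ p.2) ∧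
  (∀ x ∈ L, ∀ y ∈ L, x ≠ y → (∀ p ∈ M, ¬(({x, y} : Set (Pt d)) = {p.1, p.2})) →
    ∃ p ∈ M, dist p.1 p.2 ≤ dist x y ∧
      (((p.1 = x ∨ p.1 = y) ∧ p.2 ≠ x ∧ p.2 ≠ y) ∨
        ((p.2 = x ∨ p.2 = y) ∧ p.1 ≠ x ∧ p.1 ≠ y)))

theorem exists_greedy {d : ℕ} (L : Finset (Pt d)) : ∃ M, MProps L M := by
  classical
  induction L using Finset.strongInduction with
  | _ L IH =>
  by_cases hne : L.offDiag.Nonempty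
  · obtain ⟨e, he, hmin⟩ := L.offDiag.exists_min_image (fun p => dist p.1 p.2) hne
    rw [Finset.mem_offDiag] at he
    obtain ⟨he1, he2, hne12⟩ := he
    set L' := (L.erase e.1).erase e.2 with hL'
    have hsub : L' ⊂ L := by
      refine Finset.ssubset_iff_of_subset ?_ |>.mpr ⟨e.1, he1, ?_⟩
      · intro x hx
        exact Finset.mem_of_mem_erase (Finset.mem_of_mem_erase hx)
      · simp [hL', hne12]
    have h1L' : e.1 ∉ L' := by simp [hL', Ne.symm hne12]
    have h2L' : e.2 ∉ L' := by simp [hL']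
    have hmemL' : ∀ x ∈ L, x ≠ e.1 → x ≠ e.2 → x ∈ L' := by
      intro x hx h1 h2
      simp [hL', Finset.mem_erase, h1, h2, hx]
    have hcard : L.card = L'.card + 2 := by
      have h2 : e.2 ∈ L.erase e.1 := Finset.mem_erase.2 ⟨Ne.symm hne12, he2⟩
      have ha := Finset.card_erase_add_one h2
      have hb := Finset.card_erase_add_one he1
      rw [hL']
      omega
    obtain ⟨M', hP1, hP2, hP3, hP4, hP5⟩ := IH L' hsub
    have hM'L : ∀ p ∈ M', p.1 ∈ L ∧ p.2 ∈ L ∧ p.1 ≠ p.2 := by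
      intro p hp
      obtain ⟨h1, h2, h3⟩ := hP1 p hp
      exact ⟨hsub.1 h1, hsub.1 h2, h3⟩
    refine ⟨e :: M', ?_, ?_, ?_, ?_, ?_⟩
    · intro p hp
      rcases List.mem_cons.1 hp with rfl | hp
      · exact ⟨he1, he2, hne12⟩
      · exact hM'L p hp
    · have key : ∀ r ∈ M', e.1 ≠ r.1 ∧ e.1 ≠ r.2 ∧ e.2 ≠ r.1 ∧ e.2 ≠ r.2 := by
        intro r hr
        obtain ⟨hr1, hr2, _⟩ := hP1 r hr
        exact ⟨fun h => h1L' (h ▸ hr1), fun h => h1L' (h ▸ hr2),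
          fun h => h2L' (h ▸ hr1), fun h => h2L' (h ▸ hr2)⟩
      intro p hp q hq hpq
      rcases List.mem_cons.1 hp with rfl | hp' <;> rcases List.mem_cons.1 hq with rfl | hq'
      · exact absurd rfl hpq
      · exact key q hq'
      · exact ⟨(key p hp').1.symm, (key p hp').2.2.1.symm, (key p hp').2.1.symm,
          (key p hp').2.2.2.symm⟩
      · exact hP2 p hp' q hq' hpq
    · intro heven x hx
      by_cases h1 : x = e.1
      · exact ⟨e, List.mem_cons_self, Or.inl h1⟩
      by_cases h2 : x = e.2
      · exact ⟨e, List.mem_cons_self, Or.inr h2⟩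
      · have heven' : Even L'.card := by
          rcases heven with ⟨k, hk⟩
          rw [hcard] at hk
          exact ⟨k - 1, by omega⟩
        obtain ⟨p, hp, hxp⟩ := hP3 heven' x (hmemL' x hx h1 h2)
        exact ⟨p, List.mem_cons_of_mem _ hp, hxp⟩
    · intro hodd
      have hodd' : Odd L'.card := by
        rcases hodd with ⟨k, hk⟩
        rw [hcard] at hk
        exact ⟨k - 1, by omega⟩
      obtain ⟨u, hu, hup⟩ := hP4 hodd'
      refine ⟨u, hsub.1 hu, ?_⟩
      intro p hp
      rcases List.mem_cons.1 hp with rfl | hp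
      · constructor <;> rintro rfl <;> [exact h1L' hu; exact h2L' hu]
      · exact hup p hp
    · intro x hx y hy hxy hnotM
      have hxyod : (x, y) ∈ L.offDiag := Finset.mem_offDiag.2 ⟨hx, hy, hxy⟩
      have hle : dist e.1 e.2 ≤ dist x y := hmin (x, y) hxyod
      by_cases hx' : x = e.1 ∨ x = e.2
      · refine ⟨e, List.mem_cons_self, hle, ?_⟩
        have hne' : ¬(({x, y} : Set (Pt d)) = {e.1, e.2}) := hnotM e (List.mem_cons_self)
        rcases hx' with rfl | rfl
        · left
          refine ⟨Or.inl rfl, Ne.symm hne12, ?_⟩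
          rintro rfl
          exact hne' rfl
        · right
          refine ⟨Or.inl rfl, hne12, ?_⟩
          rintro rfl
          exact hne' (Set.pair_comm _ _)
      · by_cases hy' : y = e.1 ∨ y = e.2
        · push_neg at hx'
          refine ⟨e, List.mem_cons_self, hle, ?_⟩
          rcases hy' with rfl | rfl
          · exact Or.inl ⟨Or.inr rfl, Ne.symm hx'.2, Ne.symm hne12⟩
          · exact Or.inr ⟨Or.inr rfl, Ne.symm hx'.1, hne12⟩
        · push_neg at hx' hy'
          obtain ⟨p, hp, hd, hcond⟩ := hP5 x (hmemL' x hx hx'.1 hx'.2) y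
            (hmemL' y hy hy'.1 hy'.2) hxy
            (fun p hp => hnotM p (List.mem_cons_of_mem _ hp))
          exact ⟨p, List.mem_cons_of_mem _ hp, hd, hcond⟩
  · have hc1 : L.card ≤ 1 := by
      by_contra h
      push_neg at h
      obtain ⟨a, ha, b, hb, hab⟩ := Finset.one_lt_card.1 h
      exact hne ⟨(a, b), Finset.mem_offDiag.2 ⟨ha, hb, hab⟩⟩
    refine ⟨[], ?_, ?_, ?_, ?_, ?_⟩
    · simp
    · simp
    · intro heven x hx
      exfalso
      have : L.card = 0 := by rcases heven with ⟨k, hk⟩; omega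
      rw [Finset.card_eq_zero] at this
      simp [this] at hx
    · intro hodd
      have : L.card = 1 := by rcases hodd with ⟨k, hk⟩; omega
      obtain ⟨a, rfl⟩ := Finset.card_eq_one.1 this
      exact ⟨a, by simp, by simp⟩
    · intro x hx y hy hxy _
      exact absurd ⟨(x, y), Finset.mem_offDiag.2 ⟨hx, hy, hxy⟩⟩ hne

/-! ### Structure of moves -/

theorem fullMove_empty {d : ℕ} {S : Set (Pt d)} {q : Set (Pt d)}
    (h : FullMove S ∅ q) : ∃ x ∈ S, q = {x} := by
  rcases h with ⟨-, hx⟩ | ⟨x, _, hx, -⟩ | ⟨x, hx, y, -, z, -, -, -, -, hp, -⟩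
  · exact hx
  · exact absurd hx.symm (Set.singleton_ne_empty x)
  · exact absurd (hp ▸ (Set.mem_insert x {y})) (Set.notMem_empty x)

theorem fullMove_single {d : ℕ} {S : Set (Pt d)} {u : Pt d} {q : Set (Pt d)}
    (h : FullMove S ({u} : Set (Pt d)) q) : ∃ y ∈ S, y ≠ u ∧ q = {u, y} := by
  rcases h with ⟨hp, -⟩ | ⟨x, hx, hp, y, hy, hyx, hq⟩ | ⟨x, hx, y, hy, z, hz, hxy, -, -, hp, -, -⟩
  · exact absurd hp (Set.singleton_ne_empty u)
  · have hxu : x = u := by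
      have := hp ▸ (Set.mem_singleton x)
      exact (Set.mem_singleton_iff.1 (hp ▸ rfl : x ∈ ({u} : Set (Pt d))))
    subst hxu
    exact ⟨y, hy, hyx, hq⟩
  · exfalso
    have hxu : x = u := by
      have : x ∈ ({u} : Set (Pt d)) := hp ▸ Set.mem_insert x {y}
      exact Set.mem_singleton_iff.1 this
    have hyu : y = u := by
      have : y ∈ ({u} : Set (Pt d)) := hp ▸ Set.mem_insert_of_mem x rfl
      exact Set.mem_singleton_iff.1 this
    exact hxy (hxu.trans hyu.symm)

theorem fullMove_pair {d : ℕ} {S : Set (Pt d)} {a b : Pt d} {q : Set (Pt d)}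
    (hab : a ≠ b) (h : FullMove S ({a, b} : Set (Pt d)) q) :
    ∃ x y z, ({a, b} : Set (Pt d)) = {x, y} ∧ q = {x, z} ∧ x ∈ S ∧ z ∈ S ∧
      x ≠ y ∧ z ≠ x ∧ z ≠ y ∧ dist x z < dist x y := by
  rcases h with ⟨hp, -⟩ | ⟨x, hx, hp, -⟩ | ⟨x, hx, y, hy, z, hz, hxy, hzx, hzy, hp, hq, hd⟩
  · exact absurd (hp ▸ Set.mem_insert a {b}) (Set.notMem_empty a)
  · exfalso
    have ha : a = x := Set.mem_singleton_iff.1 (hp ▸ Set.mem_insert a {b})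
    have hb : b = x := Set.mem_singleton_iff.1 (hp ▸ Set.mem_insert_of_mem a rfl)
    exact hab (ha.trans hb.symm)
  · exact ⟨x, y, z, hp, hq, hx, hz, hxy, hzx, hzy, hd⟩


/-! ### Good positions w.r.t. the greedy matching -/

def Good {d : ℕ} (M : List (Pt d × Pt d)) (q : Set (Pt d)) : Prop :=
  ∃ p ∈ M, q = ({p.1, p.2} : Set (Pt d))

theorem good_move_from_single {d : ℕ} {L : Finset (Pt d)} {M : List (Pt d × Pt d)}
    (hP1 : ∀ p ∈ M, p.1 ∈ L ∧ p.2 ∈ L ∧ p.1 ≠ p.2)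
    (hP3 : ∀ x ∈ L, ∃ p ∈ M, x = p.1 ∨ x = p.2) {x : Pt d} (hx : x ∈ L) :
    ∃ q, FullMove (↑L : Set (Pt d)) ({x} : Set (Pt d)) q ∧ Good M q := by
  obtain ⟨p, hp, hxp⟩ := hP3 x hx
  obtain ⟨h1, h2, h12⟩ := hP1 p hp
  rcases hxp with rfl | rfl
  · exact ⟨{p.1, p.2}, Or.inr (Or.inl ⟨p.1, Finset.mem_coe.2 h1, rfl,
      p.2, Finset.mem_coe.2 h2, h12.symm, rfl⟩), ⟨p, hp, rfl⟩⟩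
  · exact ⟨{p.2, p.1}, Or.inr (Or.inl ⟨p.2, Finset.mem_coe.2 h2, rfl,
      p.1, Finset.mem_coe.2 h1, h12, rfl⟩), ⟨p, hp, Set.pair_comm p.2 p.1⟩⟩

theorem good_move_from_pair {d : ℕ} {L : Finset (Pt d)} {M : List (Pt d × Pt d)}
    (hdist : DistinctDist (↑L : Set (Pt d)))
    (hP1 : ∀ p ∈ M, p.1 ∈ L ∧ p.2 ∈ L ∧ p.1 ≠ p.2)
    (hP5 : ∀ x ∈ L, ∀ y ∈ L, x ≠ y →
      (∀ p ∈ M, ¬(({x, y} : Set (Pt d)) = {p.1, p.2})) →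
      ∃ p ∈ M, dist p.1 p.2 ≤ dist x y ∧
        (((p.1 = x ∨ p.1 = y) ∧ p.2 ≠ x ∧ p.2 ≠ y) ∨
          ((p.2 = x ∨ p.2 = y) ∧ p.1 ≠ x ∧ p.1 ≠ y)))
    {x y : Pt d} (hx : x ∈ L) (hy : y ∈ L) (hxy : x ≠ y)
    (hng : ¬ Good M ({x, y} : Set (Pt d))) :
    ∃ q, FullMove (↑L : Set (Pt d)) ({x, y} : Set (Pt d)) q ∧ Good M q := by
  have hnotM : ∀ p ∈ M, ¬(({x, y} : Set (Pt d)) = {p.1, p.2}) :=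
    fun p hp h => hng ⟨p, hp, h⟩
  obtain ⟨p, hp, hle, hcond⟩ := hP5 x hx y hy hxy hnotM
  obtain ⟨hp1, hp2, hp12⟩ := hP1 p hp
  have hlt : dist p.1 p.2 < dist x y := by
    rcases hle.lt_or_eq with h | h
    · exact h
    · exfalso
      rcases hdist p.1 (Finset.mem_coe.2 hp1) p.2 (Finset.mem_coe.2 hp2)
          x (Finset.mem_coe.2 hx) y (Finset.mem_coe.2 hy) hp12 hxy h with
        ⟨h1, h2⟩ | ⟨h1, h2⟩ <;>
        rcases hcond with ⟨-, h3, h4⟩ | ⟨-, h3, h4⟩ <;> tauto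
  rcases hcond with ⟨hor, h2x, h2y⟩ | ⟨hor, h1x, h1y⟩
  · rcases hor with h | h
    · subst h
      exact ⟨{p.1, p.2}, Or.inr (Or.inr ⟨p.1, Finset.mem_coe.2 hx, y, Finset.mem_coe.2 hy,
        p.2, Finset.mem_coe.2 hp2, hxy, h2x, h2y, rfl, rfl, hlt⟩), ⟨p, hp, rfl⟩⟩
    · subst h
      exact ⟨{p.1, p.2}, Or.inr (Or.inr ⟨p.1, Finset.mem_coe.2 hy, x, Finset.mem_coe.2 hx,
        p.2, Finset.mem_coe.2 hp2, Ne.symm hxy, h2y, h2x, Set.pair_comm x p.1, rfl,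
        by rw [dist_comm p.1 x]; exact hlt⟩), ⟨p, hp, rfl⟩⟩
  · rcases hor with h | h
    · subst h
      exact ⟨{p.2, p.1}, Or.inr (Or.inr ⟨p.2, Finset.mem_coe.2 hx, y, Finset.mem_coe.2 hy,
        p.1, Finset.mem_coe.2 hp1, hxy, h1x, h1y, rfl, rfl,
        by rw [dist_comm p.2 p.1]; exact hlt⟩), ⟨p, hp, Set.pair_comm p.2 p.1⟩⟩
    · subst h
      exact ⟨{p.2, p.1}, Or.inr (Or.inr ⟨p.2, Finset.mem_coe.2 hy, x, Finset.mem_coe.2 hx,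
        p.1, Finset.mem_coe.2 hp1, Ne.symm hxy, h1y, h1x, Set.pair_comm x p.2, rfl,
        by rw [dist_comm p.2 p.1, dist_comm p.2 x]; exact hlt⟩), ⟨p, hp, Set.pair_comm p.2 p.1⟩⟩

theorem notGood_next {d : ℕ} {L : Finset (Pt d)} {M : List (Pt d × Pt d)}
    (hP1 : ∀ p ∈ M, p.1 ∈ L ∧ p.2 ∈ L ∧ p.1 ≠ p.2)
    (hP2 : ∀ p ∈ M, ∀ q ∈ M, p ≠ q → p.1 ≠ q.1 ∧ p.1 ≠ q.2 ∧ p.2 ≠ q.1 ∧ p.2 ≠ q.2)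
    {r q : Set (Pt d)} (hGood : Good M r) (h : FullMove (↑L : Set (Pt d)) r q) :
    (∃ a b, a ∈ L ∧ b ∈ L ∧ a ≠ b ∧ q = ({a, b} : Set (Pt d))) ∧ ¬ Good M q := by
  obtain ⟨p, hp, rfl⟩ := hGood
  obtain ⟨hp1, hp2, hp12⟩ := hP1 p hp
  obtain ⟨x, y, z, hpeq, hq, hxS, hzS, hxy, hzx, hzy, -⟩ := fullMove_pair hp12 h
  have hx' : (p.1 = x ∧ p.2 = y) ∨ (p.1 = y ∧ p.2 = x) := Set.pair_eq_pair_iff.1 hpeq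
  have hxe : x = p.1 ∨ x = p.2 := by rcases hx' with ⟨h1, -⟩ | ⟨-, h2⟩
                                     exacts [Or.inl h1.symm, Or.inr h2.symm]
  have hz1 : z ≠ p.1 := by rcases hx' with ⟨h1, h2⟩ | ⟨h1, h2⟩
                           exacts [h1 ▸ hzx, h1 ▸ hzy]
  have hz2 : z ≠ p.2 := by rcases hx' with ⟨h1, h2⟩ | ⟨h1, h2⟩
                           exacts [h2 ▸ hzy, h2 ▸ hzx]
  refine ⟨⟨x, z, Finset.mem_coe.1 hxS, Finset.mem_coe.1 hzS, hzx.symm, hq⟩, ?_⟩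
  rintro ⟨p', hp', heq⟩
  rw [hq] at heq
  have hx2 : (x = p'.1 ∧ z = p'.2) ∨ (x = p'.2 ∧ z = p'.1) := Set.pair_eq_pair_iff.1 heq
  by_cases hpp : p = p'
  · subst hpp
    rcases hx2 with ⟨-, h2⟩ | ⟨-, h2⟩
    exacts [hz2 h2, hz1 h2]
  · obtain ⟨k1, k2, k3, k4⟩ := hP2 p hp p' hp' hpp
    rcases hxe with h | h <;> rcases hx2 with ⟨h', -⟩ | ⟨h', -⟩
    exacts [k1 (h ▸ h'), k2 (h ▸ h'), k3 (h ▸ h'), k4 (h ▸ h')]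

theorem notGood_after_single {d : ℕ} {L : Finset (Pt d)} {M : List (Pt d × Pt d)}
    {u : Pt d} (hum : ∀ p ∈ M, u ≠ p.1 ∧ u ≠ p.2) {q : Set (Pt d)}
    (h : FullMove (↑L : Set (Pt d)) ({u} : Set (Pt d)) q) :
    (∃ a b, a ∈ L ∧ b ∈ L ∧ a ≠ b ∧ q = ({a, b} : Set (Pt d))) ∧ ¬ Good M q := by
  obtain ⟨y, hy, hyu, hq⟩ := fullMove_single h
  have hu : u ∈ (↑L : Set (Pt d)) := by
    rcases h with ⟨hp, -⟩ | ⟨x, hx, hp, -⟩ | ⟨x, hx, y', hy', z, hz, hxy, -, -, hp, -⟩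
    · exact absurd hp (Set.singleton_ne_empty u)
    · have : x = u := Set.mem_singleton_iff.1 (hp ▸ rfl)
      exact this ▸ hx
    · exfalso
      have h1 : x = u := Set.mem_singleton_iff.1 (hp ▸ Set.mem_insert x {y'})
      have h2 : y' = u := Set.mem_singleton_iff.1 (hp ▸ Set.mem_insert_of_mem x rfl)
      exact hxy (h1.trans h2.symm)
  refine ⟨⟨u, y, Finset.mem_coe.1 hu, Finset.mem_coe.1 hy, hyu.symm, hq⟩, ?_⟩
  rintro ⟨p, hp, heq⟩
  rw [hq] at heq
  rcases Set.pair_eq_pair_iff.1 heq with ⟨h1, -⟩ | ⟨h1, -⟩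
  exacts [(hum p hp).1 h1, (hum p hp).2 h1]

theorem exists_stuck {d : ℕ} (L : Finset (Pt d)) (σA σB : Set (Pt d) → Set (Pt d))
    (hA : ValidStrat (↑L : Set (Pt d)) σA) (hB : ValidStrat (↑L : Set (Pt d)) σB) :
    ∃ k, ∀ q, ¬ FullMove (↑L : Set (Pt d)) (play σA σB k) q := by
  by_contra hcon
  push_neg at hcon
  have hstep : ∀ k, FullMove (↑L : Set (Pt d)) (play σA σB k) (play σA σB (k + 1)) := by
    intro k
    by_cases he : Even k
    · have : play σA σB (k + 1) = σA (play σA σB k) := by simp [play, he]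
      rw [this]
      exact hA _ (hcon k)
    · have : play σA σB (k + 1) = σB (play σA σB k) := by simp [play, he]
      rw [this]
      exact hB _ (hcon k)
  have hpair : ∀ k, ∃ a b, a ∈ (↑L : Set (Pt d)) ∧ b ∈ (↑L : Set (Pt d)) ∧ a ≠ b ∧
      play σA σB (k + 2) = {a, b} := by
    intro k
    induction k with
    | zero =>
      obtain ⟨x, hx, h1⟩ := fullMove_empty (show FullMove (↑L : Set (Pt d)) ∅ _ from hstep 0)
      obtain ⟨y, hy, hyx, h2⟩ := fullMove_single (h1 ▸ hstep 1)
      exact ⟨x, y, hx, hy, hyx.symm, h2⟩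
    | succ k ih =>
      obtain ⟨a, b, ha, hb, hab, heq⟩ := ih
      obtain ⟨x, y, z, hpeq, hq, hxS, hzS, hxy, hzx, hzy, -⟩ :=
        fullMove_pair hab (heq ▸ hstep (k + 2))
      exact ⟨x, z, hxS, hzS, hzx.symm, hq⟩
  have hdec : ∀ k, Metric.diam (play σA σB (k + 1 + 2)) < Metric.diam (play σA σB (k + 2)) := by
    intro k
    obtain ⟨a, b, ha, hb, hab, heq⟩ := hpair k
    obtain ⟨x, y, z, hpeq, hq, hxS, hzS, hxy, hzx, hzy, hd⟩ :=
      fullMove_pair hab (heq ▸ hstep (k + 2))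
    have h3 : play σA σB (k + 1 + 2) = {x, z} := hq
    rw [h3, heq, hpeq, Metric.diam_pair, Metric.diam_pair]
    exact hd
  have hf : StrictAnti (fun k => Metric.diam (play σA σB (k + 2))) :=
    strictAnti_nat_of_succ_lt hdec
  have hsub : Set.range (fun k => Metric.diam (play σA σB (k + 2))) ⊆
      (fun p : Pt d × Pt d => dist p.1 p.2) '' ((↑L : Set (Pt d)) ×ˢ (↑L : Set (Pt d))) := by
    rintro - ⟨k, rfl⟩
    obtain ⟨a, b, ha, hb, hab, heq⟩ := hpair k
    exact ⟨(a, b), ⟨ha, hb⟩, by simp [heq, Metric.diam_pair]⟩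
  have hfin : ((fun p : Pt d × Pt d => dist p.1 p.2) ''
      ((↑L : Set (Pt d)) ×ˢ (↑L : Set (Pt d)))).Finite :=
    (L.finite_toSet.prod L.finite_toSet).image _
  exact Set.infinite_range_of_injective hf.injective (hfin.subset hsub)

/-- in the full friendly frogs game on a finite set of size `n` in `ℝ^d`
(`d ≥ 1`) with distinct distances, Alice wins if `n` is odd and Bob wins if `n` is even. -/
theorem friendly_frogs_finite {d n : ℕ} (hd : 1 ≤ d) (L : Finset (Pt d))
    (hcard : L.card = n) (hdist : DistinctDist (↑L : Set (Pt d))) :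
    (Odd n → AliceWins (↑L : Set (Pt d))) ∧ (Even n → BobWins (↑L : Set (Pt d))) := by
  classical
  subst hcard
  obtain ⟨M, hP1, hP2, hP3, hP4, hP5⟩ := exists_greedy L
  set S : Set (Pt d) := (↑L : Set (Pt d)) with hS
  set σG : Set (Pt d) → Set (Pt d) := fun p =>
    if h : ∃ q, FullMove S p q ∧ Good M q then h.choose
    else if h' : ∃ q, FullMove S p q then h'.choose else ∅ with hσG
  have hGvalid : ValidStrat S σG := by
    intro p hp
    simp only [hσG]
    by_cases h1 : ∃ q, FullMove S p q ∧ Good M q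
    · rw [dif_pos h1]
      exact h1.choose_spec.1
    · rw [dif_neg h1, dif_pos hp]
      exact hp.choose_spec
  have hGspec : ∀ p, (∃ q, FullMove S p q ∧ Good M q) →
      FullMove S p (σG p) ∧ Good M (σG p) := by
    intro p h
    simp only [hσG]
    rw [dif_pos h]
    exact h.choose_spec
  constructor
  · -- Alice wins when the number of points is odd
    intro hodd
    obtain ⟨u, hu, hum⟩ := hP4 hodd
    set σA : Set (Pt d) → Set (Pt d) :=
      fun p => if p = (∅ : Set (Pt d)) then {u} else σG p with hσA
    have huS : u ∈ S := Finset.mem_coe.2 hu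
    have hmove0 : FullMove S ∅ ({u} : Set (Pt d)) := Or.inl ⟨rfl, u, huS, rfl⟩
    have hσA0 : σA (∅ : Set (Pt d)) = {u} := by simp [hσA]
    have hσAne : ∀ p : Set (Pt d), p ≠ ∅ → σA p = σG p := by
      intro p hp
      simp [hσA, hp]
    have hAvalid : ValidStrat S σA := by
      intro p hp
      by_cases hpe : p = ∅
      · subst hpe
        rw [hσA0]
        exact hmove0
      · rw [hσAne p hpe]
        exact hGvalid p hp
    refine ⟨σA, hAvalid, ?_⟩
    intro σB hBvalid
    have hpA : ∀ k, Even k → play σA σB (k + 1) = σA (play σA σB k) := by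
      intro k hk
      simp [play, hk]
    have hpB : ∀ k, ¬ Even k → play σA σB (k + 1) = σB (play σA σB k) := by
      intro k hk
      simp [play, hk]
    have hplay0 : play σA σB 0 = ∅ := rfl
    have hex : ∃ k, ∀ q, ¬ FullMove S (play σA σB k) q :=
      exists_stuck L σA σB hAvalid hBvalid
    set N := Nat.find hex with hNdef
    have hNspec : ∀ q, ¬ FullMove S (play σA σB N) q := Nat.find_spec hex
    have hmov : ∀ m < N, ∃ q, FullMove S (play σA σB m) q := by
      intro m hm
      have := Nat.find_min hex hm
      push_neg at this
      exact this
    refine ⟨N, ?_, hNspec, hmov⟩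
    by_contra hNodd
    have hNev : Even N := Nat.not_odd_iff_even.1 hNodd
    have inv : ∀ j, (∀ m, m < 2*j+1 → ∃ q, FullMove S (play σA σB m) q) →
        play σA σB (2*j+1) = ({u} : Set (Pt d)) ∨ Good M (play σA σB (2*j+1)) := by
      intro j
      induction j with
      | zero =>
        intro _
        left
        rw [show 2*0+1 = 0+1 from rfl, hpA 0 Even.zero, hplay0, hσA0]
      | succ j ih =>
        intro hmv
        have ihres := ih (fun m hm => hmv m (by omega))
        have hBmove : FullMove S (play σA σB (2*j+1)) (play σA σB (2*j+2)) := by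
          rw [show 2*j+2 = (2*j+1)+1 from rfl,
            hpB (2*j+1) (by simp [Nat.even_add_one, parity_simps])]
          exact hBvalid _ (hmv (2*j+1) (by omega))
        have hstruct : (∃ a b, a ∈ L ∧ b ∈ L ∧ a ≠ b ∧
            play σA σB (2*j+2) = ({a, b} : Set (Pt d))) ∧
            ¬ Good M (play σA σB (2*j+2)) := by
          rcases ihres with h | h
          · exact notGood_after_single hum (h ▸ hBmove)
          · exact notGood_next hP1 hP2 h hBmove
        obtain ⟨⟨a, b, ha, hb, hab, heq⟩, hng⟩ := hstruct
        have hne : play σA σB (2*j+2) ≠ ∅ := by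
          rw [heq]
          exact (Set.insert_nonempty a {b}).ne_empty
        have hexg : ∃ q, FullMove S (play σA σB (2*j+2)) q ∧ Good M q := by
          rw [heq] at hng ⊢
          exact good_move_from_pair hdist hP1 hP5 ha hb hab hng
        right
        rw [show 2*(j+1)+1 = (2*j+2)+1 from by ring,
          hpA (2*j+2) ⟨j+1, by ring⟩, hσAne _ hne]
        exact (hGspec _ hexg).2
    rcases Nat.eq_zero_or_pos N with h0 | hpos
    · exact hNspec {u} (by rw [h0, hplay0]; exact hmove0)
    · obtain ⟨j, hj⟩ : ∃ j, N = 2*j+2 := by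
        obtain ⟨t, ht⟩ := hNev
        exact ⟨t - 1, by omega⟩
      have ihres := inv j (fun m hm => hmov m (by omega))
      have hBmove : FullMove S (play σA σB (2*j+1)) (play σA σB (2*j+2)) := by
        rw [show 2*j+2 = (2*j+1)+1 from rfl,
          hpB (2*j+1) (by simp [Nat.even_add_one, parity_simps])]
        exact hBvalid _ (hmov (2*j+1) (by omega))
      have hstruct : (∃ a b, a ∈ L ∧ b ∈ L ∧ a ≠ b ∧
          play σA σB (2*j+2) = ({a, b} : Set (Pt d))) ∧
          ¬ Good M (play σA σB (2*j+2)) := by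
        rcases ihres with h | h
        · exact notGood_after_single hum (h ▸ hBmove)
        · exact notGood_next hP1 hP2 h hBmove
      obtain ⟨⟨a, b, ha, hb, hab, heq⟩, hng⟩ := hstruct
      obtain ⟨q, hq, -⟩ : ∃ q, FullMove S (play σA σB (2*j+2)) q ∧ Good M q := by
        rw [heq] at hng ⊢
        exact good_move_from_pair hdist hP1 hP5 ha hb hab hng
      exact hNspec q (hj ▸ hq)
  · -- Bob wins when the number of points is even
    intro heven
    refine ⟨σG, hGvalid, ?_⟩
    intro σA hAvalid
    have hpA : ∀ k, Even k → play σA σG (k + 1) = σA (play σA σG k) := by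
      intro k hk
      simp [play, hk]
    have hpB : ∀ k, ¬ Even k → play σA σG (k + 1) = σG (play σA σG k) := by
      intro k hk
      simp [play, hk]
    have hplay0 : play σA σG 0 = ∅ := rfl
    have hex : ∃ k, ∀ q, ¬ FullMove S (play σA σG k) q :=
      exists_stuck L σA σG hAvalid hGvalid
    set N := Nat.find hex with hNdef
    have hNspec : ∀ q, ¬ FullMove S (play σA σG N) q := Nat.find_spec hex
    have hmov : ∀ m < N, ∃ q, FullMove S (play σA σG m) q := by
      intro m hm
      have := Nat.find_min hex hm
      push_neg at this
      exact this
    refine ⟨N, ?_, hNspec, hmov⟩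
    by_contra hNev
    have hNodd : Odd N := Nat.not_even_iff_odd.1 hNev
    have inv : ∀ j, (∀ m, m < 2*j → ∃ q, FullMove S (play σA σG m) q) →
        play σA σG (2*j) = (∅ : Set (Pt d)) ∨ Good M (play σA σG (2*j)) := by
      intro j
      induction j with
      | zero =>
        intro _
        left
        exact hplay0
      | succ j ih =>
        intro hmv
        have ihres := ih (fun m hm => hmv m (by omega))
        have hAmove : FullMove S (play σA σG (2*j)) (play σA σG (2*j+1)) := by
          rw [hpA (2*j) ⟨j, by ring⟩]
          exact hAvalid _ (hmv (2*j) (by omega))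
        have hexg : ∃ q, FullMove S (play σA σG (2*j+1)) q ∧ Good M q := by
          rcases ihres with h | h
          · obtain ⟨x, hx, heq⟩ := fullMove_empty (h ▸ hAmove)
            rw [heq]
            exact good_move_from_single hP1 (hP3 heven) (Finset.mem_coe.1 hx)
          · obtain ⟨⟨a, b, ha, hb, hab, heq⟩, hng⟩ := notGood_next hP1 hP2 h hAmove
            rw [heq] at hng ⊢
            exact good_move_from_pair hdist hP1 hP5 ha hb hab hng
        right
        rw [show 2*(j+1) = (2*j+1)+1 from by ring,
          hpB (2*j+1) (by simp [Nat.even_add_one, parity_simps])]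
        exact (hGspec _ hexg).2
    obtain ⟨j, hj⟩ := hNodd
    have ihres := inv j (fun m hm => hmov m (by omega))
    have hAmove : FullMove S (play σA σG (2*j)) (play σA σG (2*j+1)) := by
      rw [hpA (2*j) ⟨j, by ring⟩]
      exact hAvalid _ (hmov (2*j) (by omega))
    obtain ⟨q, hq, -⟩ : ∃ q, FullMove S (play σA σG (2*j+1)) q ∧ Good M q := by
      rcases ihres with h | h
      · obtain ⟨x, hx, heq⟩ := fullMove_empty (h ▸ hAmove)
        rw [heq]
        exact good_move_from_single hP1 (hP3 heven) (Finset.mem_coe.1 hx)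
      · obtain ⟨⟨a, b, ha, hb, hab, heq⟩, hng⟩ := notGood_next hP1 hP2 h hAmove
        rw [heq] at hng ⊢
        exact good_move_from_pair hdist hP1 hP5 ha hb hab hng
    exact hNspec q (hj ▸ hq)
end
end

section
/- Suppose L ⊂ ℝ^d has all pairwise distances distinct and has no infinite descending chains. Then there exists a unique stable matching of L. -/
noncomputable section

/-- `R` encodes a matching of `L` (as the symmetric relation "matched to"):
a set of unordered pairs of distinct points of `L`, each point in at most one pair. -/
def IsMatching {d : ℕ} (L : Set (Pt d)) (R : Pt d → Pt d → Prop) : Prop :=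
  (∀ x y, R x y → R y x) ∧
  (∀ x y, R x y → x ∈ L ∧ y ∈ L ∧ x ≠ y) ∧
  (∀ x y z, R x y → R x z → y = z)

/-- The matching `R` of `L` is stable: there is no pair of distinct points of `L`, not matched
to each other, each of which is unmatched or strictly farther from its partner than from
the other point. -/
def IsStable {d : ℕ} (L : Set (Pt d)) (R : Pt d → Pt d → Prop) : Prop :=
  ¬ ∃ x ∈ L, ∃ y ∈ L, x ≠ y ∧ ¬ R x y ∧
    (∀ z, R x z → dist x y < dist x z) ∧ (∀ z, R y z → dist x y < dist y z)

open Metric Bornology Filter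

lemma locally_finite {d : ℕ} {L : Set (Pt d)} (hchain : NoDescChain L) (x : Pt d) (R : ℝ) :
    (L ∩ Metric.closedBall x R).Finite := by
  by_contra hinf
  rw [← Set.not_infinite, not_not] at hinf
  set s := L ∩ Metric.closedBall x R with hs
  have hb : IsBounded s := (isBounded_closedBall (x := x) (r := R)).subset
    (Set.inter_subset_right)
  let u := hinf.natEmbedding
  have hmem : ∀ n, (u n : Pt d) ∈ s := fun n => (u n).2
  obtain ⟨p, -, φ, hφ, hlim⟩ := tendsto_subseq_of_bounded hb hmem
  set v : ℕ → Pt d := (fun n => (u n : Pt d)) ∘ φ with hv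
  have hvinj : Function.Injective v := by
    intro a b hab
    exact hφ.injective (u.injective (Subtype.ext hab))
  have hvL : ∀ n, v n ∈ L := fun n => (hmem (φ n)).1
  -- key: arbitrarily close points distinct from p
  have key : ∀ ε : ℝ, 0 < ε → ∃ q, q ∈ L ∧ q ≠ p ∧ dist q p < ε := by
    intro ε hε
    obtain ⟨N, hN⟩ := Metric.tendsto_atTop.1 hlim ε hε
    rcases eq_or_ne (v N) p with h | h
    · refine ⟨v (N+1), hvL _, ?_, ?_⟩
      · intro h'
        exact (Nat.succ_ne_self N).elim (by
          have := hvinj (h'.trans h.symm)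
          omega)
      · have := hN (N+1) (Nat.le_succ N)
        simpa [hv] using this
    · refine ⟨v N, hvL _, h, ?_⟩
      have := hN N le_rfl
      simpa [hv] using this
  -- build a chain approaching p
  have step : ∀ q : Pt d, q ≠ p → ∃ q', q' ∈ L ∧ q' ≠ p ∧ dist q' p < dist q p / 3 := by
    intro q hq
    have : 0 < dist q p / 3 := by
      have := dist_pos.2 hq
      linarith
    exact key _ this
  obtain ⟨q0, hq0L, hq0, -⟩ := key 1 one_pos
  let g : ℕ → {q : Pt d // q ∈ L ∧ q ≠ p} := fun n =>
    Nat.rec ⟨q0, hq0L, hq0⟩ (fun _ prev =>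
      ⟨Classical.choose (step prev.1 prev.2.2),
       (Classical.choose_spec (step prev.1 prev.2.2)).1,
       (Classical.choose_spec (step prev.1 prev.2.2)).2.1⟩) n
  have hgdist : ∀ n, dist (g (n+1)).1 p < dist (g n).1 p / 3 := fun n =>
    (Classical.choose_spec (step (g n).1 (g n).2.2)).2.2
  have hgpos : ∀ n, 0 < dist (g n).1 p := fun n => dist_pos.2 (g n).2.2
  refine hchain ⟨fun n => (g n).1, fun n => (g n).2.1, ?_⟩
  apply strictAnti_nat_of_succ_lt
  intro n
  simp only
  have h1 := hgdist n
  have h2 := hgdist (n+1)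
  have h3 := hgpos n
  have h4 := hgpos (n+1)
  have h5 := hgpos (n+2)
  have hub : dist (g (n+1)).1 (g (n+2)).1 ≤ dist (g (n+1)).1 p + dist (g (n+2)).1 p := by
    rw [dist_comm (g (n+2)).1 p] at *
    exact dist_triangle _ p _
  have hlb : dist (g n).1 p - dist (g (n+1)).1 p ≤ dist (g n).1 (g (n+1)).1 := by
    have := dist_triangle (g n).1 (g (n+1)).1 p
    rw [dist_comm (g (n+1)).1 p] at this ⊢
    linarith [dist_triangle (g n).1 (g (n+1)).1 p]
  linarith

/-- mutually nearest neighbours in `S` -/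
def MutualNN {d : ℕ} (S : Set (Pt d)) (a b : Pt d) : Prop :=
  a ∈ S ∧ b ∈ S ∧ a ≠ b ∧ (∀ c ∈ S, c ≠ a → dist a b ≤ dist a c) ∧
    (∀ c ∈ S, c ≠ b → dist a b ≤ dist b c)

lemma MutualNN.symm {d : ℕ} {S : Set (Pt d)} {a b : Pt d} (h : MutualNN S a b) :
    MutualNN S b a := by
  obtain ⟨ha, hb, hab, h1, h2⟩ := h
  exact ⟨hb, ha, hab.symm, by rw [dist_comm]; exact h2, by rw [dist_comm]; exact h1⟩

lemma exists_nn {d : ℕ} {L S : Set (Pt d)} (hchain : NoDescChain L) (hSL : S ⊆ L)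
    {x y : Pt d} (hx : x ∈ S) (hy : y ∈ S) (hxy : y ≠ x) :
    ∃ b ∈ S, b ≠ x ∧ ∀ c ∈ S, c ≠ x → dist x b ≤ dist x c := by
  have hfin : ((S ∩ Metric.closedBall x (dist x y)) \ {x}).Finite :=
    ((locally_finite hchain x (dist x y)).subset
      (Set.inter_subset_inter_left _ hSL)).subset (Set.diff_subset)
  have hne : ((S ∩ Metric.closedBall x (dist x y)) \ {x}).Nonempty :=
    ⟨y, ⟨hy, by simp [dist_comm]⟩, hxy⟩
  obtain ⟨b, hb, hbmin⟩ := Set.exists_min_image _ (fun c => dist x c) hfin hne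
  refine ⟨b, hb.1.1, hb.2, ?_⟩
  intro c hc hcx
  by_cases h : dist x c ≤ dist x y
  · exact hbmin c ⟨⟨hc, by simpa [Metric.mem_closedBall, dist_comm] using h⟩, hcx⟩
  · have hby : dist x b ≤ dist x y := hbmin y ⟨⟨hy, by simp [dist_comm]⟩, hxy⟩
    linarith

lemma exists_mutualNN {d : ℕ} {L S : Set (Pt d)} (hchain : NoDescChain L) (hSL : S ⊆ L)
    {x y : Pt d} (hx : x ∈ S) (hy : y ∈ S) (hxy : y ≠ x) :
    ∃ a b, MutualNN S a b := by
  by_contra hno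
  push_neg at hno
  -- states: pairs (a,b) with b a nearest neighbour of a
  let P := {p : Pt d × Pt d // p.1 ∈ S ∧ p.2 ∈ S ∧ p.2 ≠ p.1 ∧
    ∀ c ∈ S, c ≠ p.1 → dist p.1 p.2 ≤ dist p.1 c}
  have step : ∀ q : P, ∃ b', b' ∈ S ∧ b' ≠ q.1.2 ∧
      (∀ c ∈ S, c ≠ q.1.2 → dist q.1.2 b' ≤ dist q.1.2 c) ∧
      dist q.1.2 b' < dist q.1.1 q.1.2 := by
    rintro ⟨⟨a, b⟩, ha, hb, hba, hmin⟩
    have hnm := hno a b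
    simp only [MutualNN, not_and] at hnm
    have : ¬ ∀ c ∈ S, c ≠ b → dist a b ≤ dist b c := by
      intro hcon
      exact hnm ha hb (Ne.symm hba) hmin hcon
    push_neg at this
    obtain ⟨c, hcS, hcb, hclt⟩ := this
    obtain ⟨b', hb'S, hb'b, hb'min⟩ := exists_nn hchain hSL hb hcS hcb
    refine ⟨b', hb'S, hb'b, hb'min, ?_⟩
    exact lt_of_le_of_lt (hb'min c hcS hcb) hclt
  let f : P → P := fun q =>
    ⟨(q.1.2, Classical.choose (step q)),
      q.2.2.1, (Classical.choose_spec (step q)).1,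
      (Classical.choose_spec (step q)).2.1,
      (Classical.choose_spec (step q)).2.2.1⟩
  have hdec : ∀ q : P, dist (f q).1.1 (f q).1.2 < dist q.1.1 q.1.2 := fun q =>
    (Classical.choose_spec (step q)).2.2.2
  obtain ⟨b0, hb0S, hb0x, hb0min⟩ := exists_nn hchain hSL hx hy hxy
  let q0 : P := ⟨(x, b0), hx, hb0S, hb0x, hb0min⟩
  let g : ℕ → P := fun n => f^[n] q0
  have hgsucc : ∀ n, g (n+1) = f (g n) := fun n => Function.iterate_succ_apply' f n q0
  have hfst : ∀ n, (g (n+1)).1.1 = (g n).1.2 := by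
    intro n; rw [hgsucc n]
  refine hchain ⟨fun n => (g n).1.1, fun n => hSL (g n).2.1, ?_⟩
  apply strictAnti_nat_of_succ_lt
  intro n
  simp only
  rw [hfst n, hfst (n+1), hgsucc n]
  exact hdec (g n)

/-- iterated removal of mutually-nearest pairs -/
def Sn {d : ℕ} (L : Set (Pt d)) : ℕ → Set (Pt d)
  | 0 => L
  | n+1 => {x ∈ Sn L n | ∀ b, ¬ MutualNN (Sn L n) x b}

/-- the candidate stable matching -/
def Mrel {d : ℕ} (L : Set (Pt d)) (x y : Pt d) : Prop := ∃ n, MutualNN (Sn L n) x y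

variable {d : ℕ} {L : Set (Pt d)}

lemma Sn_subset : ∀ n, Sn L n ⊆ L
  | 0 => le_rfl
  | n+1 => (Set.sep_subset _ _).trans (Sn_subset n)

lemma Sn_succ_subset (n : ℕ) : Sn L (n+1) ⊆ Sn L n := Set.sep_subset _ _

lemma Sn_antitone : Antitone (Sn L) :=
  antitone_nat_of_succ_le Sn_succ_subset

lemma matched_not_mem {n : ℕ} {x b : Pt d} (h : MutualNN (Sn L n) x b) :
    x ∉ Sn L (n+1) := by
  intro hx
  exact hx.2 b h

lemma not_mem_Sn {x : Pt d} (hx : x ∈ L) :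
    ∀ n, x ∉ Sn L n → ∃ m, m < n ∧ ∃ b, MutualNN (Sn L m) x b := by
  intro n
  induction n with
  | zero => intro h; exact absurd hx h
  | succ n ih =>
    intro h
    by_cases hn : x ∈ Sn L n
    · simp only [Sn, Set.mem_setOf_eq, not_and, not_forall, not_not] at h
      obtain ⟨b, hb⟩ := h hn
      exact ⟨n, Nat.lt_succ_self n, b, hb⟩
    · obtain ⟨m, hm, hb⟩ := ih hn
      exact ⟨m, hm.trans (Nat.lt_succ_self n), hb⟩

lemma Mrel_symm {x y : Pt d} (h : Mrel L x y) : Mrel L y x := by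
  obtain ⟨n, hn⟩ := h; exact ⟨n, hn.symm⟩

lemma Mrel_functional (hdist : DistinctDist L) {x y z : Pt d}
    (hxy : Mrel L x y) (hxz : Mrel L x z) : y = z := by
  obtain ⟨n, hn⟩ := hxy
  obtain ⟨m, hm⟩ := hxz
  rcases lt_trichotomy n m with h | h | h
  · exact absurd (Sn_antitone h hm.1) (matched_not_mem hn)
  · subst h
    have h1 : dist x y ≤ dist x z := hn.2.2.2.1 z hm.2.1 (Ne.symm hm.2.2.1)
    have h2 : dist x z ≤ dist x y := hm.2.2.2.1 y hn.2.1 (Ne.symm hn.2.2.1)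
    have heq : dist x y = dist x z := le_antisymm h1 h2
    have hxL := Sn_subset n hn.1
    have hyL := Sn_subset n hn.2.1
    have hzL := Sn_subset n hm.2.1
    rcases hdist x hxL y hyL x hxL z hzL hn.2.2.1 hm.2.2.1 heq with ⟨-, h⟩ | ⟨h, -⟩
    · exact h
    · exact absurd h.symm (Ne.symm hm.2.2.1)
  · exact absurd (Sn_antitone h hn.1) (matched_not_mem hm)

/-- at most one point is never matched -/
lemma unmatched_unique (hchain : NoDescChain L) {x y : Pt d}
    (hx : ∀ n, x ∈ Sn L n) (hy : ∀ n, y ∈ Sn L n) (hxy : x ≠ y) : False := by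
  set T : Set (Pt d) := {p | ∀ n, p ∈ Sn L n} with hT
  have hTL : T ⊆ L := fun p hp => Sn_subset 0 (hp 0)
  obtain ⟨a, b, hab⟩ := exists_mutualNN hchain hTL (x := y) (y := x) hy hx hxy
  -- stabilization
  set D := dist a b with hD
  set F := (L ∩ Metric.closedBall a D) ∪ (L ∩ Metric.closedBall b D) with hF
  have hFfin : F.Finite := (locally_finite hchain a D).union (locally_finite hchain b D)
  have hGfin : (F \ T).Finite := hFfin.subset Set.diff_subset
  have hleave : ∀ p ∈ F \ T, ∃ n, p ∉ Sn L n := by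
    rintro p ⟨-, hpT⟩
    simpa [hT] using hpT
  choose! np hnp using hleave
  obtain ⟨N, hN⟩ := (hGfin.image np).bddAbove
  have hout : ∀ p ∈ F \ T, p ∉ Sn L N := by
    intro p hp hpS
    exact hnp p hp (Sn_antitone (hN (Set.mem_image_of_mem np hp)) hpS)
  have hmnn : MutualNN (Sn L N) a b := by
    refine ⟨hab.1 N, hab.2.1 N, hab.2.2.1, ?_, ?_⟩
    · intro c hcS hca
      by_contra hlt
      push_neg at hlt
      have hcF : c ∈ F := Or.inl ⟨Sn_subset N hcS, Metric.mem_closedBall.2 (by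
        rw [dist_comm]; exact hlt.le)⟩
      have hcT : c ∈ T := by
        by_contra hcT
        exact hout c ⟨hcF, hcT⟩ hcS
      exact absurd (hab.2.2.2.1 c hcT hca) (not_le.2 hlt)
    · intro c hcS hcb
      by_contra hlt
      push_neg at hlt
      have hcF : c ∈ F := Or.inr ⟨Sn_subset N hcS, Metric.mem_closedBall.2 (by
        rw [dist_comm]; exact hlt.le)⟩
      have hcT : c ∈ T := by
        by_contra hcT
        exact hout c ⟨hcF, hcT⟩ hcS
      exact absurd (hab.2.2.2.2 c hcT hcb) (not_le.2 hlt)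
  exact matched_not_mem hmnn (hab.1 (N+1))

lemma Mrel_isMatching (hdist : DistinctDist L) : IsMatching L (Mrel L) := by
  refine ⟨fun x y h => Mrel_symm h, ?_, fun x y z => Mrel_functional hdist⟩
  rintro x y ⟨n, hn⟩
  exact ⟨Sn_subset n hn.1, Sn_subset n hn.2.1, hn.2.2.1⟩

/-- if `x` is matched at stage `n`, `y` survives to stage `n`, and `x` prefers `y`
to its partner, contradiction -/
lemma blockside {n : ℕ} {x y b : Pt d} (hm : MutualNN (Sn L n) x b)
    (hy : y ∈ Sn L n) (hyx : y ≠ x) (hlt : dist x y < dist x b) : False :=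
  absurd (hm.2.2.2.1 y hy hyx) (not_le.2 hlt)

lemma Mrel_isStable (hchain : NoDescChain L) : IsStable L (Mrel L) := by
  rintro ⟨x, hxL, y, hyL, hxy, hnM, hbx, hby⟩
  by_cases hxT : ∀ n, x ∈ Sn L n
  · by_cases hyT : ∀ n, y ∈ Sn L n
    · exact unmatched_unique hchain hxT hyT hxy
    · -- y is matched at some stage m, and x survives forever
      push_neg at hyT
      obtain ⟨n, hn⟩ := hyT
      obtain ⟨m, -, b, hb⟩ := not_mem_Sn hyL n hn
      exact blockside hb (hxT m) hxy (by
        rw [dist_comm y x]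
        exact hby b ⟨m, hb⟩)
  · push_neg at hxT
    obtain ⟨n, hn⟩ := hxT
    obtain ⟨mx, -, bx, hbx'⟩ := not_mem_Sn hxL n hn
    by_cases hyT : ∀ n, y ∈ Sn L n
    · exact blockside hbx' (hyT mx) (Ne.symm hxy) (hbx bx ⟨mx, hbx'⟩)
    · push_neg at hyT
      obtain ⟨n', hn'⟩ := hyT
      obtain ⟨my, -, by', hby'⟩ := not_mem_Sn hyL n' hn'
      rcases le_total mx my with h | h
      · exact blockside hbx' (Sn_antitone h hby'.1) (Ne.symm hxy) (hbx bx ⟨mx, hbx'⟩)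
      · exact blockside hby' (Sn_antitone h hbx'.1) hxy (by
          rw [dist_comm y x]
          exact hby by' ⟨my, hby'⟩)

lemma M_sub_R (hdist : DistinctDist L) {R : Pt d → Pt d → Prop}
    (hRm : IsMatching L R) (hRs : IsStable L R) :
    ∀ n x y, MutualNN (Sn L n) x y → R x y := by
  intro n
  induction n using Nat.strong_induction_on with
  | _ n ih =>
    intro x y hxy
    by_contra hR
    obtain ⟨Rsymm, Rmem, Rfun⟩ := hRm
    have hxL : x ∈ L := Sn_subset n hxy.1
    have hyL : y ∈ L := Sn_subset n hxy.2.1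
    -- any R-partner of a point of the pair survives to stage n
    have survive : ∀ u z, MutualNN (Sn L n) x y → u ∈ Sn L n → R u z → z ∈ Sn L n := by
      intro u z huv huS huz
      by_contra hzn
      have hzL : z ∈ L := (Rmem u z huz).2.1
      obtain ⟨m, hm, w, hw⟩ := not_mem_Sn hzL n hzn
      have hRzw : R z w := ih m hm z w hw
      have : u = w := Rfun z u w (Rsymm u z huz) hRzw
      subst this
      exact matched_not_mem hw.symm (Sn_antitone (Nat.succ_le_of_lt hm) huS)
    have hblock : ∀ z, R x z → dist x y < dist x z := by
      intro z hz
      have hzS : z ∈ Sn L n := survive x z hxy hxy.1 hz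
      have hzx : z ≠ x := Ne.symm (Rmem x z hz).2.2
      have hle : dist x y ≤ dist x z := hxy.2.2.2.1 z hzS hzx
      rcases hle.lt_or_eq with h | h
      · exact h
      · exfalso
        have hzL : z ∈ L := (Rmem x z hz).2.1
        rcases hdist x hxL y hyL x hxL z hzL hxy.2.2.1 (Ne.symm hzx) h with ⟨-, he⟩ | ⟨he, -⟩
        · exact hR (by rw [he]; exact hz)
        · exact hzx he.symm
    have hblock' : ∀ z, R y z → dist x y < dist y z := by
      intro z hz
      have hzS : z ∈ Sn L n := survive y z hxy hxy.2.1 hz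
      have hzy : z ≠ y := Ne.symm (Rmem y z hz).2.2
      have hle : dist x y ≤ dist y z := hxy.2.2.2.2 z hzS hzy
      rcases hle.lt_or_eq with h | h
      · exact h
      · exfalso
        have hzL : z ∈ L := (Rmem y z hz).2.1
        rcases hdist x hxL y hyL y hyL z hzL hxy.2.2.1 (Ne.symm hzy) h with ⟨he, -⟩ | ⟨he, -⟩
        · exact hxy.2.2.1 he
        · exact hR (Rsymm y x (by rw [he]; exact hz))
    exact hRs ⟨x, hxL, y, hyL, hxy.2.2.1, hR, hblock, hblock'⟩

lemma R_eq_M (hdist : DistinctDist L) (hchain : NoDescChain L)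
    {R : Pt d → Pt d → Prop} (hRm : IsMatching L R) (hRs : IsStable L R) :
    R = Mrel L := by
  have hMR : ∀ x y, Mrel L x y → R x y := by
    rintro x y ⟨n, hn⟩
    exact M_sub_R hdist hRm hRs n x y hn
  funext x y
  apply propext
  constructor
  · intro hxy
    by_contra hM
    obtain ⟨Rsymm, Rmem, Rfun⟩ := hRm
    obtain ⟨hxL, hyL, hxyne⟩ := Rmem x y hxy
    have hxT : ∀ n, x ∈ Sn L n := by
      intro n
      by_contra hn
      obtain ⟨m, -, b, hb⟩ := not_mem_Sn hxL n hn
      have : R x b := hMR x b ⟨m, hb⟩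
      have : y = b := Rfun x y b hxy this
      exact hM (by rw [this]; exact ⟨m, hb⟩)
    have hyT : ∀ n, y ∈ Sn L n := by
      intro n
      by_contra hn
      obtain ⟨m, -, b, hb⟩ := not_mem_Sn hyL n hn
      have : R y b := hMR y b ⟨m, hb⟩
      have : x = b := Rfun y x b (Rsymm x y hxy) this
      exact hM (Mrel_symm (by rw [this]; exact ⟨m, hb⟩))
    exact (unmatched_unique hchain hxT hyT hxyne).elim
  · exact hMR x y

/-- a set with distinct distances and no infinite descending chains has a
unique stable matching. -/
theorem exists_unique_stable_matching {d : ℕ} (L : Set (Pt d))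
    (hdist : DistinctDist L) (hchain : NoDescChain L) :
    ∃! R : Pt d → Pt d → Prop, IsMatching L R ∧ IsStable L R := by
  refine ⟨Mrel L, ⟨Mrel_isMatching hdist, Mrel_isStable hchain⟩, ?_⟩
  rintro R ⟨hm, hs⟩
  exact R_eq_M hdist hchain hm hs
end
end

section
/- Let L ⊆ ℝ^d be a set with no infinite descending chains. Then L is discrete in the sense of being locally finite: every bounded subset of ℝ^d contains only finitely many points of L. -/
noncomputable section

/-- a set with no infinite descending chains is locally finite: every bounded
subset of `ℝ^d` contains only finitely many of its points. -/
theorem noDescChain_locallyFinite {d : ℕ} (L : Set (Pt d)) (hchain : NoDescChain L) :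
    ∀ S : Set (Pt d), Bornology.IsBounded S → (L ∩ S).Finite := by
  intro S hS
  by_contra hfin
  have hinf : (L ∩ S).Infinite := hfin
  -- closure of S is compact
  have hK : IsCompact (closure S) := hS.isCompact_closure
  have hsub : L ∩ S ⊆ closure S := fun x hx => subset_closure hx.2
  obtain ⟨p, -, hp⟩ := hinf.exists_accPt_of_subset_isCompact hK hsub
  rw [accPt_iff_nhds] at hp
  -- for every ε > 0, there is a point of L at positive distance < ε from p
  have key : ∀ ε : ℝ, 0 < ε → ∃ x ∈ L, 0 < dist x p ∧ dist x p < ε := by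
    intro ε hε
    obtain ⟨y, ⟨hy1, hy2⟩, hy3⟩ := hp (Metric.ball p ε) (Metric.ball_mem_nhds p hε)
    exact ⟨y, hy2.1, dist_pos.mpr hy3, hy1⟩
  -- build a sequence with geometrically shrinking distances to p
  have step : ∀ x : {x : Pt d // x ∈ L ∧ 0 < dist x p},
      ∃ y : {x : Pt d // x ∈ L ∧ 0 < dist x p}, dist y.1 p < dist x.1 p / 4 := by
    intro x
    obtain ⟨y, hyL, hy0, hylt⟩ := key (dist x.1 p / 4) (by have := x.2.2; positivity)
    exact ⟨⟨y, hyL, hy0⟩, hylt⟩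
  obtain ⟨x0, hx0L, hx00, -⟩ := key 1 one_pos
  let f : ℕ → {x : Pt d // x ∈ L ∧ 0 < dist x p} :=
    fun n => Nat.rec ⟨x0, hx0L, hx00⟩ (fun _ x => (step x).choose) n
  have hf : ∀ n, dist (f (n + 1)).1 p < dist (f n).1 p / 4 := fun n => (step (f n)).choose_spec
  apply hchain
  refine ⟨fun n => (f n).1, fun n => (f n).2.1, strictAnti_nat_of_succ_lt fun n => ?_⟩
  simp only
  set r : ℕ → ℝ := fun n => dist (f n).1 p with hr
  have hrpos : ∀ n, 0 < r n := fun n => (f n).2.2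
  have h1 : r (n + 1) < r n / 4 := hf n
  have h2 : r (n + 2) < r (n + 1) / 4 := hf (n + 1)
  calc dist (f (n + 1)).1 (f (n + 2)).1 ≤ r (n + 1) + r (n + 2) := dist_triangle_right _ _ _
    _ < r n / 2 := by nlinarith [hrpos (n+1), hrpos (n+2)]
    _ < r n - r (n + 1) := by nlinarith [hrpos n]
    _ ≤ dist (f n).1 (f (n + 1)).1 := by
        have := dist_triangle (f n).1 (f (n + 1)).1 p
        simp only [hr] at *; linarith
end
end

section
/- Let L ⊆ ℝ^d have no infinite descending chains. Then the friendly frogs move relation on two-frog positions is well-founded: there is no infinite sequence of positions {x_0,y_0}, {x_1,y_1}, … in which each position is obtained from the previous one by a legal move. -/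
noncomputable section

/-- The friendly frogs move relation on two-frog positions, which are unordered pairs of
distinct points of `L`: one of the two points is replaced by a point `z ∈ L` outside the
pair in such a way that the distance between the occupied points strictly decreases. -/
def FFMove {d : ℕ} (L : Set (Pt d)) (p q : Sym2 (Pt d)) : Prop :=
  ∃ x y z, x ∈ L ∧ y ∈ L ∧ z ∈ L ∧ x ≠ y ∧ z ≠ x ∧ z ≠ y ∧
    dist x z < dist x y ∧ p = s(x, y) ∧ q = s(x, z)

lemma chain_of_acc {α : Type*} [PseudoMetricSpace α] {S : Set α} {b : α}
    (h : ∀ r : ℝ, 0 < r → ∃ p, p ∈ S ∧ 0 < dist p b ∧ dist p b < r) :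
    ∃ c : ℕ → α, (∀ n, c n ∈ S) ∧ StrictAnti (fun n => dist (c n) (c (n + 1))) := by
  choose f hfS hf0 hfr using h
  let g : ℕ → {x : ℝ // 0 < x} := fun n =>
    Nat.rec ⟨1, one_pos⟩ (fun _ prev =>
      ⟨dist (f (prev.1 / 4) (div_pos prev.2 (by norm_num))) b,
        hf0 _ (div_pos prev.2 (by norm_num))⟩) n
  let c : ℕ → α := fun n => f ((g n).1 / 4) (div_pos (g n).2 (by norm_num))
  have hc : ∀ n, dist (c n) b = (g (n+1)).1 := fun n => rfl
  have hlt : ∀ n, (g (n+1)).1 < (g n).1 / 4 := fun n => hfr _ _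
  refine ⟨c, fun n => hfS _ _, strictAnti_nat_of_succ_lt fun n => ?_⟩
  show dist (c (n+1)) (c (n+2)) < dist (c n) (c (n+1))
  have t1 : dist (c (n+1)) (c (n+2)) ≤ dist (c (n+1)) b + dist (c (n+2)) b :=
    dist_triangle_right _ _ _
  have t2 : dist (c n) b - dist (c (n+1)) b ≤ dist (c n) (c (n+1)) :=
    le_trans (le_abs_self _) (abs_dist_sub_le _ _ _)
  linarith [hc n, hc (n+1), hc (n+2), hlt (n+1), hlt (n+2), (g (n+1)).2]


/-- if `L` has no infinite descending chains then the friendly frogs move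
relation on two-frog positions admits no infinite sequence of consecutive legal moves. -/
theorem ffMove_no_infinite_play {d : ℕ} (L : Set (Pt d)) (hchain : NoDescChain L) :
    ¬ ∃ p : ℕ → Sym2 (Pt d), ∀ n, FFMove L (p n) (p (n + 1)) := by
  rintro ⟨p, hp⟩
  choose x y z hxL hyL hzL hxy hzx hzy hlt hpn hpsucc using hp
  have hsym : ∀ n, (x (n+1) = x n ∧ y (n+1) = z n) ∨ (x (n+1) = z n ∧ y (n+1) = x n) := by
    intro n
    have h : s(x (n+1), y (n+1)) = s(x n, z n) := by rw [← hpn (n+1), hpsucc n]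
    rw [Sym2.eq_iff] at h
    tauto
  set D : ℕ → ℝ := fun n => dist (x n) (y n) with hDdef
  have hDsucc : ∀ n, D (n+1) = dist (x n) (z n) := by
    intro n
    rcases hsym n with ⟨h1, h2⟩ | ⟨h1, h2⟩
    · simp only [hDdef]; rw [h1, h2]
    · simp only [hDdef]; rw [h1, h2, dist_comm]
  have hDanti : StrictAnti D := strictAnti_nat_of_succ_lt fun n => by
    rw [hDsucc n]; exact hlt n
  classical
  by_cases hB : ∀ N, ∃ n, N ≤ n ∧ x (n+1) = z n
  · -- the stationary frog switches infinitely often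
    let t : ℕ → ℕ := fun j =>
      Nat.rec (Nat.find (hB 0)) (fun _ prev => Nat.find (hB (prev + 1))) j
    have hspec : ∀ j, (t j + 1 ≤ t (j+1)) ∧ x (t (j+1) + 1) = z (t (j+1)) := fun j =>
      Nat.find_spec (hB (t j + 1))
    have hBt : ∀ j, x (t j + 1) = z (t j) := by
      intro j
      cases j with
      | zero => exact (Nat.find_spec (hB 0)).2
      | succ j => exact (hspec j).2
    have hmin : ∀ j k, t j < k → k < t (j+1) → x (k+1) = x k := by
      intro j k h1 h2
      have hnot : ¬ (t j + 1 ≤ k ∧ x (k+1) = z k) := Nat.find_min (hB (t j + 1)) h2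
      have hne : x (k+1) ≠ z k := fun h => hnot ⟨h1, h⟩
      rcases hsym k with ⟨h3, _⟩ | ⟨h3, _⟩
      · exact h3
      · exact absurd h3 hne
    have hxt : ∀ j, x (t (j+1)) = z (t j) := by
      intro j
      have key : ∀ k, t j + 1 ≤ k → k ≤ t (j+1) → x k = z (t j) := by
        intro k hk
        induction k, hk using Nat.le_induction with
        | base => intro _; exact hBt j
        | succ k hk ih =>
          intro hle
          have h1 : x (k+1) = x k := hmin j k (by omega) (by omega)
          rw [h1]; exact ih (by omega)
      exact key (t (j+1)) (hspec j).1 le_rfl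
    have htmono : StrictMono t := strictMono_nat_of_lt_succ fun j => by
      have := (hspec j).1; omega
    refine hchain ⟨fun j => x (t j), fun j => hxL (t j), ?_⟩
    have heq : (fun j => dist (x (t j)) (x (t (j + 1)))) = fun j => D (t j + 1) := by
      funext j
      rw [hxt j, ← hDsucc (t j)]
    rw [heq]
    exact hDanti.comp_strictMono fun a b hab => by
      have := htmono hab; omega
  · -- eventually the same frog stays put forever
    push_neg at hB
    obtain ⟨N, hN⟩ := hB
    have hxconst : ∀ n, N ≤ n → x n = x N := by
      intro n hn
      induction n, hn using Nat.le_induction with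
      | base => rfl
      | succ n hn ih =>
        rcases hsym n with ⟨h1, _⟩ | ⟨h1, _⟩
        · rw [h1]; exact ih
        · exact absurd h1 (hN n hn)
    set a := x N with ha
    set w : ℕ → Pt d := fun n => y (N + n) with hw
    have hwd : ∀ n, dist a (w n) = D (N + n) := by
      intro n
      simp only [hw, hDdef, ha]
      rw [hxconst (N + n) (Nat.le_add_right _ _)]
    have hwinj : Function.Injective w := by
      intro m n hmn
      have : D (N + m) = D (N + n) := by rw [← hwd m, ← hwd n, hmn]
      have := hDanti.injective this
      omega
    have hSinf : (Set.range w).Infinite := Set.infinite_range_of_injective hwinj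
    have hsub : Set.range w ⊆ Metric.closedBall a (D N) := by
      rintro _ ⟨n, rfl⟩
      rw [Metric.mem_closedBall, dist_comm, hwd n]
      exact hDanti.antitone (Nat.le_add_right _ _)
    obtain ⟨b, _, hacc⟩ := hSinf.exists_accPt_of_subset_isCompact
      (isCompact_closedBall a (D N)) hsub
    rw [accPt_iff_nhds] at hacc
    have hstep : ∀ r : ℝ, 0 < r → ∃ q, q ∈ Set.range w ∧ 0 < dist q b ∧ dist q b < r := by
      intro r hr
      obtain ⟨q, ⟨hqU, hqS⟩, hqb⟩ := hacc (Metric.ball b r) (Metric.ball_mem_nhds b hr)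
      exact ⟨q, hqS, dist_pos.2 hqb, Metric.mem_ball.1 hqU⟩
    obtain ⟨c, hcS, hcanti⟩ := chain_of_acc hstep
    refine hchain ⟨c, fun n => ?_, hcanti⟩
    obtain ⟨m, hm⟩ := hcS n
    rw [← hm]
    exact hyL (N + m)
end
end

section
/- Suppose L ⊂ ℝ^d has all pairwise distances distinct and has no infinite descending chains, and let M be the unique stable matching of L. In friendly frogs on L, the position with the two frogs at x and y is a P-position if and only if {x,y} ∈ M. -/
noncomputable section

private lemma chain_of_acc_s6 {d : ℕ} {L : Set (Pt d)} (p : Pt d)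
    (hacc : ∀ ε : ℝ, 0 < ε → ∃ q ∈ L, q ≠ p ∧ dist q p < ε) : ¬ NoDescChain L := by
  intro hchain
  have step : ∀ q : {q : Pt d // q ∈ L ∧ q ≠ p},
      ∃ q' : {q : Pt d // q ∈ L ∧ q ≠ p}, dist q'.1 p < dist q.1 p / 4 := by
    intro q
    have h0 : 0 < dist q.1 p := dist_pos.2 q.2.2
    obtain ⟨q', hq'L, hq'p, hq'd⟩ := hacc (dist q.1 p / 4) (by linarith)
    exact ⟨⟨q', hq'L, hq'p⟩, hq'd⟩
  choose stepf hstep using step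
  obtain ⟨q0, hq0L, hq0p, -⟩ := hacc 1 one_pos
  let g : ℕ → {q : Pt d // q ∈ L ∧ q ≠ p} := fun n => stepf^[n] ⟨q0, hq0L, hq0p⟩
  have hgs : ∀ n, g (n + 1) = stepf (g n) := fun n => Function.iterate_succ_apply' _ _ _
  have hrpos : ∀ n, 0 < dist (g n).1 p := fun n => dist_pos.2 (g n).2.2
  have hrlt : ∀ n, dist (g (n + 1)).1 p < dist (g n).1 p / 4 := by
    intro n; rw [hgs n]; exact hstep (g n)
  apply hchain
  refine ⟨fun n => (g n).1, fun n => (g n).2.1, ?_⟩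
  apply strictAnti_nat_of_succ_lt
  intro n
  simp only
  have h1 := hrlt n
  have h2 := hrlt (n + 1)
  have h3 := hrpos n
  have hub : dist (g (n + 1)).1 (g (n + 2)).1 ≤ dist (g (n + 1)).1 p + dist (g (n + 2)).1 p := by
    calc dist (g (n + 1)).1 (g (n + 2)).1 ≤ dist (g (n + 1)).1 p + dist p (g (n + 2)).1 :=
          dist_triangle _ _ _
      _ = dist (g (n + 1)).1 p + dist (g (n + 2)).1 p := by rw [dist_comm p]
  have hlb : dist (g n).1 p - dist (g (n + 1)).1 p ≤ dist (g n).1 (g (n + 1)).1 :=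
    (le_abs_self _).trans (abs_dist_sub_le _ _ p)
  linarith

private lemma chain_of_bounded_infinite {d : ℕ} {L S : Set (Pt d)} (hSL : S ⊆ L)
    (hb : Bornology.IsBounded S) (hi : S.Infinite) : ¬ NoDescChain L := by
  obtain ⟨p, -, hacc⟩ := hi.exists_accPt_of_subset_isCompact hb.isCompact_closure subset_closure
  apply chain_of_acc_s6 p
  intro ε hε
  rw [accPt_iff_nhds] at hacc
  obtain ⟨q, ⟨hq1, hq2⟩, hq3⟩ := hacc (Metric.ball p ε) (Metric.ball_mem_nhds p hε)
  exact ⟨q, hSL hq2, hq3, by simpa [Metric.mem_ball] using hq1⟩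

private lemma no_infinite_play {d : ℕ} {L : Set (Pt d)} (hchain : NoDescChain L)
    (f : ℕ → Sym2 (Pt d)) (hf : ∀ n, FFMove L (f n) (f (n + 1))) : False := by
  choose X Y Z hXL hYL hZL hXY hZX hZY hd hp hq using hf
  set D : ℕ → ℝ := fun n => dist (X n) (Y n) with hD
  have hDanti : StrictAnti D := by
    apply strictAnti_nat_of_succ_lt
    intro n
    have he : s(X (n + 1), Y (n + 1)) = s(X n, Z n) := by rw [← hp (n + 1), hq n]
    rw [Sym2.eq_iff] at he
    show dist (X (n+1)) (Y (n+1)) < dist (X n) (Y n)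
    rcases he with ⟨h1, h2⟩ | ⟨h1, h2⟩
    · rw [h1, h2]; exact hd n
    · rw [h1, h2, dist_comm]; exact hd n
  have hmemL : ∀ n a, a ∈ f n → a ∈ L := by
    intro n a ha
    rw [hp n, Sym2.mem_iff] at ha
    rcases ha with h | h
    · rw [h]; exact hXL n
    · rw [h]; exact hYL n
  have hmem_iff : ∀ n a, a ∈ f n ↔ a = X n ∨ a = Y n := fun n a => by rw [hp n, Sym2.mem_iff]
  classical
  by_cases hB : ∃ N a, ∀ m, N ≤ m → a ∈ f m
  · obtain ⟨N, a, ha⟩ := hB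
    set b : ℕ → Pt d := fun m => if a = X m then Y m else X m with hb
    have hbd : ∀ m, N ≤ m → dist a (b m) = D m ∧ b m ≠ a ∧ b m ∈ L := by
      intro m hm
      have hm2 := (hmem_iff m a).1 (ha m hm)
      by_cases hax : a = X m
      · rw [hb]; simp only [if_pos hax]
        exact ⟨by rw [hax], fun hc => hXY m (hax ▸ hc.symm), hYL m⟩
      · have hay : a = Y m := hm2.resolve_left hax
        rw [hb]; simp only [if_neg hax]
        exact ⟨by rw [hay, dist_comm], fun hc => hax hc.symm, hXL m⟩
    have hSL : b '' Set.Ici N ⊆ L := by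
      rintro - ⟨m, hm, rfl⟩; exact (hbd m hm).2.2
    have hbound : Bornology.IsBounded (b '' Set.Ici N) := by
      apply Bornology.IsBounded.subset (Metric.isBounded_closedBall (x := a) (r := D N))
      rintro - ⟨m, hm, rfl⟩
      rw [Metric.mem_closedBall, dist_comm, (hbd m hm).1]
      exact hDanti.antitone hm
    have hinj : Set.InjOn b (Set.Ici N) := by
      intro m hm m' hm' hmm
      have : D m = D m' := by rw [← (hbd m hm).1, ← (hbd m' hm').1, hmm]
      exact hDanti.injective this
    have hinf : (b '' Set.Ici N).Infinite :=
      (Set.infinite_image_iff hinj).2 (Set.Ici_infinite N)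
    exact chain_of_bounded_infinite hSL hbound hinf hchain
  · push_neg at hB
    have key : ∀ (k : ℕ) (c : Pt d), c ∈ f k → ∃ n, k ≤ n ∧ c = Y n := by
      intro k c hc
      have hex : ∃ m, k ≤ m ∧ c ∉ f m := hB k c
      obtain ⟨hkM, hcM⟩ := Nat.find_spec hex
      set M := Nat.find hex with hM
      have hMk : M ≠ k := by intro h; rw [h] at hcM; exact hcM hc
      have hM1 : k + 1 ≤ M := by omega
      have hprev : c ∈ f (M - 1) := by
        by_contra hcp
        have := Nat.find_min hex (m := M - 1) (by omega)
        exact this ⟨by omega, hcp⟩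
      have hMe : M - 1 + 1 = M := by omega
      refine ⟨M - 1, by omega, ?_⟩
      have hXmem : X (M - 1) ∈ f M := by
        rw [← hMe, hq (M - 1)]; exact Sym2.mem_mk_left _ _
      rcases (hmem_iff (M - 1) c).1 hprev with h | h
      · rw [← h] at hXmem; exact absurd hXmem hcM
      · exact h
    have hX0 : X 0 ∈ f 0 := by rw [hp 0]; exact Sym2.mem_mk_left _ _
    have step : ∀ s : {s : ℕ × Pt d // s.2 ∈ f s.1},
        ∃ t : {s : ℕ × Pt d // s.2 ∈ f s.1},
          ∃ n, s.1.1 ≤ n ∧ t.1.1 = n + 1 ∧ dist s.1.2 t.1.2 = D n := by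
      intro s
      obtain ⟨n, hkn, hcy⟩ := key s.1.1 s.1.2 s.2
      have hXmem : X n ∈ f (n + 1) := by rw [hq n]; exact Sym2.mem_mk_left _ _
      exact ⟨⟨(n + 1, X n), hXmem⟩, n, hkn, rfl, by rw [hcy, dist_comm]⟩
    choose stepf nf hn1 hn2 hn3 using step
    let g : ℕ → {s : ℕ × Pt d // s.2 ∈ f s.1} := fun i => stepf^[i] ⟨(0, X 0), hX0⟩
    have hgs : ∀ i, g (i + 1) = stepf (g i) := fun i => Function.iterate_succ_apply' _ _ _
    apply hchain
    refine ⟨fun i => (g i).1.2, fun i => hmemL (g i).1.1 _ (g i).2, ?_⟩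
    have hdist : ∀ i, dist (g i).1.2 (g (i + 1)).1.2 = D (nf (g i)) := by
      intro i
      have h := hn3 (g i)
      rw [hgs i]; exact h
    have hlt : ∀ i, nf (g i) < nf (g (i + 1)) := by
      intro i
      have h1 : (g (i + 1)).1.1 = nf (g i) + 1 := by rw [hgs i]; exact hn2 (g i)
      have h2 : (g (i + 1)).1.1 ≤ nf (g (i + 1)) := hn1 (g (i + 1))
      omega
    apply strictAnti_nat_of_succ_lt
    intro i
    show dist (g (i+1)).1.2 (g (i+2)).1.2 < dist (g i).1.2 (g (i+1)).1.2
    rw [hdist i, hdist (i + 1)]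
    exact hDanti (hlt i)

private def MatchedPos {d : ℕ} (R : Pt d → Pt d → Prop) : Sym2 (Pt d) → Prop :=
  fun q => ∃ a b, R a b ∧ q = s(a, b)

/-- let `L` have distinct distances and no infinite descending chains, let `R`
be its (unique) stable matching, and let `P` be the P-position predicate of friendly frogs
on `L`, i.e. any predicate satisfying the defining fixpoint equation (which determines it
uniquely since the move relation is well-founded).  Then a two-frog position `{x,y}` is a
P-position if and only if `x` and `y` are matched to each other. -/
theorem ff_ppositions_eq_stable_matching {d : ℕ} (L : Set (Pt d))
    (hdist : DistinctDist L) (hchain : NoDescChain L)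
    (R : Pt d → Pt d → Prop) (hM : IsMatching L R) (hS : IsStable L R)
    (P : Sym2 (Pt d) → Prop)
    (hP : ∀ x ∈ L, ∀ y ∈ L, x ≠ y →
      (P s(x, y) ↔ ∀ q, FFMove L s(x, y) q → ¬ P q)) :
    ∀ x ∈ L, ∀ y ∈ L, x ≠ y → (P s(x, y) ↔ R x y) := by
  obtain ⟨hsymm, hmem, huniq⟩ := hM
  set Q : Sym2 (Pt d) → Prop := MatchedPos R with hQdef
  have hQiff : ∀ x y : Pt d, (Q s(x, y) ↔ R x y) := by
    intro x y
    constructor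
    · rintro ⟨a, b, hab, he⟩
      rw [Sym2.eq_iff] at he
      rcases he with ⟨h1, h2⟩ | ⟨h1, h2⟩
      · rw [h1, h2]; exact hab
      · rw [h1, h2]; exact hsymm a b hab
    · intro h; exact ⟨x, y, h, rfl⟩
  have hQfix : ∀ x ∈ L, ∀ y ∈ L, x ≠ y →
      (Q s(x, y) ↔ ∀ q, FFMove L s(x, y) q → ¬ Q q) := by
    intro x hx y hy hxy
    constructor
    · intro hQp q hmove hQq
      obtain ⟨x', y', z', hx', hy', hz', hxy', hzx', hzy', hd', hpe, hqe⟩ := hmove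
      have hR1 : R x' y' := (hQiff x' y').1 (hpe ▸ hQp)
      have hR2 : R x' z' := (hQiff x' z').1 (hqe ▸ hQq)
      exact hzy' (huniq x' y' z' hR1 hR2).symm
    · intro hall
      by_contra hnQ
      have hnR : ¬ R x y := fun h => hnQ ((hQiff x y).2 h)
      have hstab : ¬ ((∀ z, R x z → dist x y < dist x z) ∧
          (∀ z, R y z → dist x y < dist y z)) := by
        rintro ⟨h1, h2⟩; exact hS ⟨x, hx, y, hy, hxy, hnR, h1, h2⟩
      rw [not_and_or] at hstab
      have mk : ∀ u v : Pt d, u ∈ L → v ∈ L → u ≠ v → s(u, v) = s(x, y) → ¬ R u v →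
          ¬ (∀ z, R u z → dist u v < dist u z) → False := by
        intro u v hu hv huv hme hnRuv hnh
        push_neg at hnh
        obtain ⟨z, hRz, hdz⟩ := hnh
        obtain ⟨-, hzL, huz⟩ := hmem u z hRz
        have hzv : z ≠ v := fun h => hnRuv (h ▸ hRz)
        have hne : dist u z ≠ dist u v := by
          intro h
          rcases hdist u hu z hzL u hu v hv huz huv h with ⟨-, h2⟩ | ⟨h1, -⟩
          · exact hzv h2
          · exact huv h1
        have hlt : dist u z < dist u v := lt_of_le_of_ne hdz hne
        have hmove : FFMove L s(x, y) s(u, z) :=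
          ⟨u, v, z, hu, hv, hzL, huv, Ne.symm huz, hzv, hlt, hme.symm, rfl⟩
        exact hall _ hmove ⟨u, z, hRz, rfl⟩
      rcases hstab with h | h
      · exact mk x y hx hy hxy rfl hnR h
      · rw [dist_comm x y] at h
        exact mk y x hy hx (Ne.symm hxy) Sym2.eq_swap (fun hr => hnR (hsymm _ _ hr)) h
  intro x hx y hy hxy
  by_contra hne
  have hneQ : ¬ (P s(x, y) ↔ Q s(x, y)) := fun h => hne (h.trans (hQiff x y))
  set Bad : Sym2 (Pt d) → Prop :=
    fun p => ∃ a ∈ L, ∃ b ∈ L, a ≠ b ∧ p = s(a, b) ∧ ¬ (P p ↔ Q p) with hBad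
  have hstep : ∀ p, Bad p → ∃ q, FFMove L p q ∧ Bad q := by
    rintro p ⟨a, ha, b, hb, hab, rfl, hne'⟩
    have hPfix := hP a ha b hb hab
    have hQfx := hQfix a ha b hb hab
    by_cases hPp : P s(a, b)
    · have hnQ : ¬ Q s(a, b) := fun h => hne' (iff_of_true hPp h)
      have hh : ¬ (∀ q, FFMove L s(a, b) q → ¬ Q q) := fun h => hnQ (hQfx.2 h)
      push_neg at hh
      obtain ⟨q, hm, hQq⟩ := hh
      have hnPq : ¬ P q := hPfix.1 hPp q hm
      obtain ⟨x', y', z', hx', hy'L, hz', hxy', hzx', hzy', hdlt, hpe, hqe⟩ := hm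
      exact ⟨q, ⟨x', y', z', hx', hy'L, hz', hxy', hzx', hzy', hdlt, hpe, hqe⟩,
        x', hx', z', hz', Ne.symm hzx', hqe, fun h => hnPq (h.2 hQq)⟩
    · have hQp : Q s(a, b) := by
        by_contra hq; exact hne' (iff_of_false hPp hq)
      have hh : ¬ (∀ q, FFMove L s(a, b) q → ¬ P q) := fun h => hPp (hPfix.2 h)
      push_neg at hh
      obtain ⟨q, hm, hPq⟩ := hh
      have hnQq : ¬ Q q := hQfx.1 hQp q hm
      obtain ⟨x', y', z', hx', hy'L, hz', hxy', hzx', hzy', hdlt, hpe, hqe⟩ := hm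
      exact ⟨q, ⟨x', y', z', hx', hy'L, hz', hxy', hzx', hzy', hdlt, hpe, hqe⟩,
        x', hx', z', hz', Ne.symm hzx', hqe, fun h => hnQq (h.1 hPq)⟩
  have hbad0 : Bad s(x, y) := ⟨x, hx, y, hy, hxy, rfl, hneQ⟩
  have stepc : ∀ s : {p // Bad p}, ∃ t : {p // Bad p}, FFMove L s.1 t.1 := by
    intro s
    obtain ⟨q, hm, hb⟩ := hstep s.1 s.2
    exact ⟨⟨q, hb⟩, hm⟩
  choose sf hsf using stepc
  have hmoves : ∀ n, FFMove L ((sf^[n] ⟨s(x, y), hbad0⟩).1) ((sf^[n + 1] ⟨s(x, y), hbad0⟩).1) := by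
    intro n
    rw [Function.iterate_succ_apply']
    exact hsf _
  exact no_infinite_play hchain _ hmoves
end
end

section
/- Suppose L ⊂ ℝ^d has all pairwise distances distinct and has no infinite descending chains, and let M be the unique stable matching of L. In the colored friendly frogs game on L, the position (x,y) is a P-position if and only if x desires y, i.e., |x − y| ≤ |x − M(x)|. -/
noncomputable section

/-- The move relation of colored friendly frogs on `L`.  Positions are ordered pairs
`(x, y)` of distinct points of `L`, where `y` is the frog of the player about to move;
a legal move goes to `(z, x)` for some `z ∈ L \ {x, y}` with `dist z x < dist x y`. -/
def ColMove {d : ℕ} (L : Set (Pt d)) (p q : Pt d × Pt d) : Prop :=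
  ∃ x y z, p = (x, y) ∧ q = (z, x) ∧ x ∈ L ∧ y ∈ L ∧ z ∈ L ∧
    x ≠ y ∧ z ≠ x ∧ z ≠ y ∧ dist z x < dist x y

/-- let `L` have distinct distances and no infinite descending chains, let `R`
be its (unique) stable matching, and let `P` be the P-position predicate of colored
friendly frogs on `L` (any predicate satisfying the defining fixpoint equation, which
determines it uniquely by well-foundedness).  Then `(x, y)` is a P-position if and only if
`x` desires `y`, i.e. `dist x y ≤ dist x (M x)` (with the right side `∞` if `x` is
unmatched). -/
theorem colored_ff_ppositions_iff_desire {d : ℕ} (L : Set (Pt d))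
    (hdist : DistinctDist L) (hchain : NoDescChain L)
    (R : Pt d → Pt d → Prop) (hM : IsMatching L R) (hS : IsStable L R)
    (P : Pt d × Pt d → Prop)
    (hP : ∀ x ∈ L, ∀ y ∈ L, x ≠ y →
      (P (x, y) ↔ ∀ q, ColMove L (x, y) q → ¬ P q)) :
    ∀ x ∈ L, ∀ y ∈ L, x ≠ y →
      (P (x, y) ↔ ∀ z, R x z → dist x y ≤ dist x z) := by
  obtain ⟨hsymm, hmem, huniq⟩ := hM
  -- Step 1: the reversed move relation is well-founded.
  have hwf : WellFounded (fun q p : Pt d × Pt d => ColMove L p q) := by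
    set Mv : Pt d × Pt d → Pt d × Pt d → Prop := fun q p => ColMove L p q with hMv
    constructor
    intro p
    by_contra hp
    have hstep : ∀ x : {a : Pt d × Pt d // ¬Acc Mv a},
        ∃ y : {a : Pt d × Pt d // ¬Acc Mv a}, Mv y.1 x.1 := by
      rintro ⟨x, hx⟩
      obtain ⟨w, hw1, hw2⟩ := exists_not_acc_lt_of_not_acc hx
      exact ⟨⟨w, hw1⟩, hw2⟩
    choose g hg using hstep
    set f : ℕ → Pt d × Pt d := fun n => (g^[n] ⟨p, hp⟩).1 with hfdef
    have hmove : ∀ n, ColMove L (f n) (f (n + 1)) := by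
      intro n
      have : g^[n + 1] ⟨p, hp⟩ = g (g^[n] ⟨p, hp⟩) := Function.iterate_succ_apply' g n _
      show ColMove L (g^[n] ⟨p, hp⟩).1 (g^[n+1] ⟨p, hp⟩).1
      rw [this]
      exact hg (g^[n] ⟨p, hp⟩)
    have hkey : ∀ n, (f (n + 1)).2 = (f n).1 ∧ (f n).2 ∈ L ∧
        dist ((f (n + 1)).1) ((f (n + 1)).2) < dist ((f n).1) ((f n).2) := by
      intro n
      obtain ⟨x, y, z, hpn, hqn, hxL, hyL, hzL, hxy, hzx, hzy, hlt⟩ := hmove n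
      rw [hpn, hqn]
      exact ⟨rfl, hyL, hlt⟩
    apply hchain
    refine ⟨fun n => (f n).2, fun n => (hkey n).2.1, strictAnti_nat_of_succ_lt fun n => ?_⟩
    show dist ((f (n + 1)).2) ((f (n + 2)).2) < dist ((f n).2) ((f (n + 1)).2)
    calc dist ((f (n + 1)).2) ((f (n + 2)).2)
        = dist ((f (n + 1)).1) ((f (n + 1)).2) := by
          rw [(hkey (n + 1)).1]; exact dist_comm _ _
      _ < dist ((f n).1) ((f n).2) := (hkey n).2.2
      _ = dist ((f n).2) ((f (n + 1)).2) := by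
          rw [(hkey n).1]; exact dist_comm _ _
  -- Step 2: well-founded induction.
  have key : ∀ p : Pt d × Pt d, ∀ x ∈ L, ∀ y ∈ L, x ≠ y → p = (x, y) →
      (P p ↔ ∀ z, R x z → dist x y ≤ dist x z) := by
    intro p
    induction p using WellFounded.induction hwf with
    | _ p ih =>
    intro x hx y hy hxy hp
    subst hp
    rw [hP x hx y hy hxy]
    constructor
    · -- P-position → x desires y
      intro hmoves w hw
      by_contra hcon
      push_neg at hcon
      -- move to (w, x) where w = M(x)
      have hwL : w ∈ L := (hmem x w hw).2.1
      have hxw : x ≠ w := (hmem x w hw).2.2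
      have hwy : w ≠ y := by
        rintro rfl
        exact lt_irrefl _ hcon
      have hmv : ColMove L (x, y) (w, x) :=
        ⟨x, y, w, rfl, rfl, hx, hy, hwL, hxy, hxw.symm, hwy, by rwa [dist_comm]⟩
      apply hmoves _ hmv
      rw [ih (w, x) hmv w hwL x hx hxw.symm rfl]
      intro v hv
      have : v = x := huniq w v x hv (hsymm x w hw)
      subst this
      exact le_refl _
    · -- x desires y → every move leads to an N-position
      intro hQ q hmv hPq
      obtain ⟨x', y', z, hp', hq', hx'L, hy'L, hzL, hx'y', hzx', hzy', hlt⟩ := hmv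
      rw [Prod.mk.injEq] at hp'
      obtain ⟨rfl, rfl⟩ := hp'
      rw [hq'] at hPq
      have hmv' : ColMove L (x, y) (z, x) :=
        ⟨x, y, z, rfl, rfl, hx'L, hy'L, hzL, hx'y', hzx', hzy', hlt⟩
      rw [ih (z, x) hmv' z hzL x hx hzx' rfl] at hPq
      -- now hPq : z desires x; derive an unstable pair (x, z)
      apply hS
      have hnRxz : ¬ R x z := by
        intro hR
        have : dist x z < dist x y := by rwa [dist_comm] at hlt
        exact absurd (hQ z hR) (not_le.2 this)
      refine ⟨x, hx, z, hzL, hzx'.symm, hnRxz, fun v hv => ?_, fun v hv => ?_⟩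
      · calc dist x z = dist z x := dist_comm x z
          _ < dist x y := hlt
          _ ≤ dist x v := hQ v hv
      · have hle : dist z x ≤ dist z v := hPq v hv
        have hzv : z ≠ v := (hmem z v hv).2.2
        have hvL : v ∈ L := (hmem z v hv).2.1
        rcases lt_or_eq_of_le hle with hlt' | heq
        · rwa [dist_comm x z]
        · exfalso
          rcases hdist z hzL x hx z hzL v hvL hzx' hzv heq with ⟨_, hxv⟩ | ⟨hzv', _⟩
          · exact hnRxz (hsymm z x (hxv ▸ hv))
          · exact hzv hzv'
  exact fun x hx y hy hxy => key (x, y) x hx y hy hxy rfl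
end
end

section
/- Let L_A and L_B be disjoint subsets of ℝ^d whose union L = L_A ∪ L_B has distinct distances and no infinite descending chains. Then there exists a unique stable two-color matching of (L_A, L_B); moreover all points left unmatched by it belong to the same one of the two sets (either every unmatched point is in L_A, or every unmatched point is in L_B). -/
noncomputable section

/-- `R` encodes a two-color matching of the disjoint sets `(A, B)`: `R x y` means the
amber point `x ∈ A` is matched to the blue point `y ∈ B`, and each point lies in at most
one pair. -/
def IsTCMatching {d : ℕ} (A B : Set (Pt d)) (R : Pt d → Pt d → Prop) : Prop :=
  (∀ x y, R x y → x ∈ A ∧ y ∈ B) ∧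
  (∀ x y y', R x y → R x y' → y = y') ∧
  (∀ x x' y, R x y → R x' y → x = x')

/-- The two-color matching `R` of `(A, B)` is stable: there are no `x ∈ A` and `y ∈ B`, not
matched to each other, each of which is unmatched or strictly farther from its partner
than from the other point. -/
def IsTCStable {d : ℕ} (A B : Set (Pt d)) (R : Pt d → Pt d → Prop) : Prop :=
  ¬ ∃ x ∈ A, ∃ y ∈ B, ¬ R x y ∧
    (∀ z, R x z → dist x y < dist x z) ∧ (∀ z, R z y → dist x y < dist z y)

namespace STC

open Metric

variable {d : ℕ}

lemma chain_of_succ {L : Set (Pt d)} (h : NoDescChain L) (c : ℕ → Pt d) (hc : ∀ n, c n ∈ L)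
    (hd : ∀ n, dist (c (n + 1)) (c (n + 2)) < dist (c n) (c (n + 1))) : False :=
  h ⟨c, hc, strictAnti_nat_of_succ_lt hd⟩

lemma locally_finite {L : Set (Pt d)} (h : NoDescChain L) (p : Pt d) (r : ℝ) :
    (L ∩ closedBall p r).Finite := by
  by_contra hinf
  rw [← Set.not_infinite, not_not] at hinf
  obtain ⟨q, -, hq⟩ := hinf.exists_accPt_of_subset_isCompact
    (isCompact_closedBall p r) Set.inter_subset_right
  rw [accPt_iff_nhds] at hq
  -- step function
  have step : ∀ x : Pt d, x ≠ q → ∃ y : Pt d, (y ∈ L ∧ y ≠ q) ∧ dist y q < dist x q / 3 := by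
    intro x hx
    have hpos : (0:ℝ) < dist x q / 3 := by
      have := dist_pos.mpr hx; linarith
    obtain ⟨y, ⟨hyU, hyL, -⟩, hyq⟩ := hq (ball q (dist x q / 3)) (ball_mem_nhds q hpos)
    exact ⟨y, ⟨hyL, hyq⟩, by simpa [dist_comm] using mem_ball.mp hyU⟩
  obtain ⟨x0, ⟨-, hx0L, -⟩, hx0q⟩ := hq Set.univ Filter.univ_mem
  let T := {x : Pt d // x ∈ L ∧ x ≠ q}
  have step' : ∀ t : T, ∃ s : T, dist s.1 q < dist t.1 q / 3 := fun t => by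
    obtain ⟨y, hy1, hy2⟩ := step t.1 t.2.2
    exact ⟨⟨y, hy1⟩, hy2⟩
  choose g hg using step'
  set c : ℕ → T := fun n => g^[n] ⟨x0, hx0L, hx0q⟩ with hcdef
  have hsucc : ∀ n, c (n + 1) = g (c n) := fun n => Function.iterate_succ_apply' g n _
  have hdec : ∀ n, dist (c (n + 1)).1 q < dist (c n).1 q / 3 := fun n => by
    rw [hsucc n]; exact hg (c n)
  refine chain_of_succ h (fun n => (c n).1) (fun n => (c n).2.1) (fun n => ?_)
  have h0 : 0 < dist (c n).1 q := dist_pos.mpr (c n).2.2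
  have h1 := hdec n
  have h2 := hdec (n + 1)
  have hub : dist (c (n + 1)).1 (c (n + 2)).1 ≤ dist (c (n + 1)).1 q + dist (c (n + 2)).1 q := by
    calc dist (c (n + 1)).1 (c (n + 2)).1 ≤ dist (c (n + 1)).1 q + dist q (c (n + 2)).1 :=
          dist_triangle _ _ _
      _ = dist (c (n + 1)).1 q + dist (c (n + 2)).1 q := by rw [dist_comm q]
  have hlb : dist (c n).1 q - dist (c (n + 1)).1 q ≤ dist (c n).1 (c (n + 1)).1 := by
    have := dist_triangle (c n).1 (c (n + 1)).1 q
    linarith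
  linarith

lemma exists_nearest {L : Set (Pt d)} (h : NoDescChain L) {S : Set (Pt d)} (hSL : S ⊆ L)
    (x : Pt d) {y0 : Pt d} (hy0 : y0 ∈ S) : ∃ y ∈ S, ∀ z ∈ S, dist x y ≤ dist x z := by
  have hfin : (S ∩ closedBall x (dist x y0)).Finite :=
    (locally_finite h x (dist x y0)).subset (by
      intro z hz; exact ⟨hSL hz.1, hz.2⟩)
  have hne : (S ∩ closedBall x (dist x y0)).Nonempty :=
    ⟨y0, hy0, mem_closedBall.mpr (by rw [dist_comm])⟩
  obtain ⟨y, hy, hymin⟩ := Set.exists_min_image _ (fun z => dist x z) hfin hne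
  refine ⟨y, hy.1, fun z hz => ?_⟩
  by_cases hzb : z ∈ closedBall x (dist x y0)
  · exact hymin z ⟨hz, hzb⟩
  · have h1 : dist x y0 < dist x z := by
      have := mem_closedBall.not.mp hzb
      rw [dist_comm z x] at this; linarith [not_le.mp this]
    have h2 : dist x y ≤ dist x y0 := hymin y0 ⟨hy0, mem_closedBall.mpr (by rw [dist_comm])⟩
    linarith

end STC

namespace STC

open Metric

variable {d : ℕ}

/-- Mutually-closest (opposite color) pair within the surviving set `S`. -/
def mcp (A B : Set (Pt d)) (S : Set (Pt d)) (x y : Pt d) : Prop :=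
  x ∈ A ∧ y ∈ B ∧ x ∈ S ∧ y ∈ S ∧
  (∀ b, b ∈ B → b ∈ S → b ≠ y → dist x y < dist x b) ∧
  (∀ a, a ∈ A → a ∈ S → a ≠ x → dist x y < dist a y)

/-- The surviving (unmatched) set after `n` rounds of removing mutually closest pairs. -/
def US (A B : Set (Pt d)) : ℕ → Set (Pt d)
  | 0 => A ∪ B
  | n + 1 => {p | p ∈ US A B n ∧ (∀ y, ¬ mcp A B (US A B n) p y) ∧
      (∀ x, ¬ mcp A B (US A B n) x p)}

/-- The iterated mutually-closest matching. -/
def Rm (A B : Set (Pt d)) (x y : Pt d) : Prop := ∃ n, mcp A B (US A B n) x y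

variable {A B : Set (Pt d)}

lemma US_succ_subset (n : ℕ) : US A B (n + 1) ⊆ US A B n := fun _ hp => hp.1

lemma US_antitone : Antitone (US A B) :=
  antitone_nat_of_succ_le US_succ_subset

lemma US_subset_union : ∀ n, US A B n ⊆ A ∪ B
  | 0 => le_refl _
  | n + 1 => (US_succ_subset n).trans (US_subset_union n)

lemma not_mem_succ_left {n : ℕ} {x y : Pt d} (h : mcp A B (US A B n) x y) :
    x ∉ US A B (n + 1) := fun hx => hx.2.1 y h

lemma not_mem_succ_right {n : ℕ} {x y : Pt d} (h : mcp A B (US A B n) x y) :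
    y ∉ US A B (n + 1) := fun hy => hy.2.2 x h

lemma mcp_unique_right {S : Set (Pt d)} {x y y' : Pt d} (h : mcp A B S x y)
    (h' : mcp A B S x y') : y = y' := by
  by_contra hne
  exact absurd (h'.2.2.2.2.1 y h.2.1 h.2.2.2.1 hne)
    (not_lt.mpr (le_of_lt (h.2.2.2.2.1 y' h'.2.1 h'.2.2.2.1 (Ne.symm hne))))

lemma mcp_unique_left {S : Set (Pt d)} {x x' y : Pt d} (h : mcp A B S x y)
    (h' : mcp A B S x' y) : x = x' := by
  by_contra hne
  exact absurd (h'.2.2.2.2.2 x h.1 h.2.2.1 hne)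
    (not_lt.mpr (le_of_lt (h.2.2.2.2.2 x' h'.1 h'.2.2.1 (Ne.symm hne))))

lemma Rm_matching : IsTCMatching A B (Rm A B) := by
  refine ⟨fun x y ⟨n, h⟩ => ⟨h.1, h.2.1⟩, ?_, ?_⟩
  · rintro x y y' ⟨n, hn⟩ ⟨m, hm⟩
    rcases lt_trichotomy n m with h | h | h
    · exact absurd (US_antitone (Nat.succ_le_of_lt h) hm.2.2.1) (not_mem_succ_left hn)
    · subst h; exact mcp_unique_right hn hm
    · exact absurd (US_antitone (Nat.succ_le_of_lt h) hn.2.2.1) (not_mem_succ_left hm)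
  · rintro x x' y ⟨n, hn⟩ ⟨m, hm⟩
    rcases lt_trichotomy n m with h | h | h
    · exact absurd (US_antitone (Nat.succ_le_of_lt h) hm.2.2.2.1) (not_mem_succ_right hn)
    · subst h; exact mcp_unique_left hn hm
    · exact absurd (US_antitone (Nat.succ_le_of_lt h) hn.2.2.2.1) (not_mem_succ_right hm)

section Hyps

variable (hdisj : Disjoint A B) (hdist : DistinctDist (A ∪ B)) (hchain : NoDescChain (A ∪ B))

/-- The set of points never matched. -/
def Uinf (A B : Set (Pt d)) : Set (Pt d) := ⋂ n, US A B n

lemma Uinf_subset (n : ℕ) : Uinf A B ⊆ US A B n := Set.iInter_subset _ n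

lemma Uinf_subset_union : Uinf A B ⊆ A ∪ B := (Uinf_subset 0)

include hdisj in
lemma neAB {a b : Pt d} (ha : a ∈ A) (hb : b ∈ B) : a ≠ b := fun h =>
  Set.disjoint_left.mp hdisj ha (h ▸ hb)

include hdisj hdist hchain in
/-- Key claim: no pair of points of `Uinf` is "mutually closest within `Uinf`". -/
lemma mcp_claim {a b : Pt d} (haA : a ∈ A) (ha : a ∈ Uinf A B) (hbB : b ∈ B)
    (hb : b ∈ Uinf A B) :
    ∃ c ∈ Uinf A B, (c ∈ A ∧ dist c b < dist a b) ∨ (c ∈ B ∧ dist a c < dist a b) := by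
  by_contra hcon
  push_neg at hcon
  set r := dist a b with hr
  -- the finite set of interfering points that eventually get matched
  set F : Set (Pt d) := ((A ∪ B) ∩ (closedBall a r ∪ closedBall b r)) \ Uinf A B with hF
  have hFfin : F.Finite := by
    refine (((locally_finite hchain a r).union (locally_finite hchain b r)).subset ?_)
    rintro p ⟨⟨hp1, hp2⟩, -⟩
    rcases hp2 with h | h
    · exact Or.inl ⟨hp1, h⟩
    · exact Or.inr ⟨hp1, h⟩
  have hFout : ∀ p ∈ F, ∃ n, p ∉ US A B n := by
    rintro p ⟨-, hp⟩
    simpa [Uinf, Set.mem_iInter] using hp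
  -- a uniform stage by which all of F is gone
  have hex : ∀ p : Pt d, ∃ n, p ∈ F → p ∉ US A B n := by
    intro p
    by_cases hp : p ∈ F
    · obtain ⟨n, hn⟩ := hFout p hp; exact ⟨n, fun _ => hn⟩
    · exact ⟨0, fun h => absurd h hp⟩
  choose f hf using hex
  obtain ⟨N, hN⟩ : ∃ N, ∀ p ∈ F, p ∉ US A B N := by
    refine ⟨hFfin.toFinset.sup f, fun p hp hpU => ?_⟩
    exact hf p hp (US_antitone (Finset.le_sup (hFfin.mem_toFinset.mpr hp)) hpU)
  -- (a, b) is a mutually closest pair in `US A B N`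
  have hmcp : mcp A B (US A B N) a b := by
    have hab : a ≠ b := neAB hdisj haA hbB
    refine ⟨haA, hbB, Uinf_subset N ha, Uinf_subset N hb, ?_, ?_⟩
    · intro b' hb'B hb'U hb'ne
      by_contra hlt
      push_neg at hlt
      have hb'inf : b' ∈ Uinf A B := by
        by_contra hout
        have hb'F : b' ∈ F := by
          refine ⟨⟨Or.inr hb'B, Or.inl ?_⟩, hout⟩
          rw [mem_closedBall, dist_comm]; exact hlt
        exact hN b' hb'F hb'U
      have heq : dist a b' = dist a b := le_antisymm hlt ((hcon b' hb'inf).2 hb'B)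
      have hab' : a ≠ b' := neAB hdisj haA hb'B
      rcases hdist a (Or.inl haA) b' (Or.inr hb'B) a (Or.inl haA) b (Or.inr hbB)
        hab' hab heq with ⟨-, h2⟩ | ⟨h1, -⟩
      · exact hb'ne h2
      · exact hab h1
    · intro a' ha'A ha'U ha'ne
      by_contra hlt
      push_neg at hlt
      have ha'inf : a' ∈ Uinf A B := by
        by_contra hout
        have ha'F : a' ∈ F := by
          refine ⟨⟨Or.inl ha'A, Or.inr ?_⟩, hout⟩
          rw [mem_closedBall]
          exact hlt
        exact hN a' ha'F ha'U
      have heq : dist a' b = dist a b := le_antisymm hlt ((hcon a' ha'inf).1 ha'A)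
      have ha'b : a' ≠ b := neAB hdisj ha'A hbB
      rcases hdist a' (Or.inl ha'A) b (Or.inr hbB) a (Or.inl haA) b (Or.inr hbB)
        ha'b hab heq with ⟨h1, -⟩ | ⟨h1, -⟩
      · exact ha'ne h1
      · exact ha'b h1
  exact not_mem_succ_left hmcp (Uinf_subset (N + 1) ha)

end Hyps

end STC

namespace STC

open Metric

variable {d : ℕ} {A B : Set (Pt d)}
variable (hdisj : Disjoint A B) (hdist : DistinctDist (A ∪ B)) (hchain : NoDescChain (A ∪ B))

include hdisj hdist hchain in
/-- No two opposite-color points both survive forever. -/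
lemma no_pair_Uinf : ¬ ∃ a ∈ A, a ∈ Uinf A B ∧ ∃ b ∈ B, b ∈ Uinf A B := by
  rintro ⟨a0, ha0A, ha0, b0, hb0B, hb0⟩
  -- the type of surviving points whose opposite side also survives
  let T := {p : Pt d // p ∈ Uinf A B ∧
    ((p ∈ A ∧ ∃ q ∈ B, q ∈ Uinf A B) ∨ (p ∈ B ∧ ∃ q ∈ A, q ∈ Uinf A B))}
  have hstep : ∀ t : T, ∃ s : T,
      ((t.1 ∈ A → s.1 ∈ B ∧ ∀ z ∈ B, z ∈ Uinf A B → dist t.1 s.1 ≤ dist t.1 z) ∧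
       (t.1 ∈ B → s.1 ∈ A ∧ ∀ z ∈ A, z ∈ Uinf A B → dist t.1 s.1 ≤ dist t.1 z)) := by
    rintro ⟨p, hp, hcases⟩
    rcases hcases with ⟨hpA, q, hqB, hq⟩ | ⟨hpB, q, hqA, hq⟩
    · obtain ⟨y, hy, hmin⟩ := exists_nearest hchain
        (show B ∩ Uinf A B ⊆ A ∪ B from fun z hz => Or.inr hz.1) p
        (show q ∈ B ∩ Uinf A B from ⟨hqB, hq⟩)
      refine ⟨⟨y, hy.2, Or.inr ⟨hy.1, p, hpA, hp⟩⟩, fun _ => ⟨hy.1, fun z hzB hz =>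
        hmin z ⟨hzB, hz⟩⟩, fun hpB => absurd hpA (fun h => neAB hdisj h hpB rfl)⟩
    · obtain ⟨y, hy, hmin⟩ := exists_nearest hchain
        (show A ∩ Uinf A B ⊆ A ∪ B from fun z hz => Or.inl hz.1) p
        (show q ∈ A ∩ Uinf A B from ⟨hqA, hq⟩)
      refine ⟨⟨y, hy.2, Or.inl ⟨hy.1, p, hpB, hp⟩⟩,
        fun hpA => absurd hpA (fun h => neAB hdisj h hpB rfl),
        fun _ => ⟨hy.1, fun z hzA hz => hmin z ⟨hzA, hz⟩⟩⟩
  choose g hg1 hg2 using hstep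
  -- decrease lemma
  have hdec : ∀ t : T, dist (g t).1 (g (g t)).1 < dist t.1 (g t).1 := by
    rintro ⟨p, hp, hcases⟩
    set t : T := ⟨p, hp, hcases⟩
    rcases hcases with ⟨hpA, -⟩ | ⟨hpB, -⟩
    · obtain ⟨hqB, hqmin⟩ := hg1 t hpA
      set q := (g t).1
      obtain ⟨hrA, hrmin⟩ := hg2 (g t) hqB
      obtain ⟨c, hc, hcc⟩ := mcp_claim hdisj hdist hchain hpA hp hqB (g t).2.1
      rcases hcc with ⟨hcA, hlt⟩ | ⟨hcB, hlt⟩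
      · calc dist q (g (g t)).1 ≤ dist q c := hrmin c hcA hc
          _ = dist c q := dist_comm _ _
          _ < dist p q := hlt
      · exact absurd hlt (not_lt.mpr (hqmin c hcB hc))
    · obtain ⟨hqA, hqmin⟩ := hg2 t hpB
      set q := (g t).1
      obtain ⟨hrB, hrmin⟩ := hg1 (g t) hqA
      obtain ⟨c, hc, hcc⟩ := mcp_claim hdisj hdist hchain hqA (g t).2.1 hpB hp
      rcases hcc with ⟨hcA, hlt⟩ | ⟨hcB, hlt⟩
      · exact absurd (show dist p c < dist p q by rw [dist_comm c p, dist_comm q p] at hlt; exact hlt)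
          (not_lt.mpr (show dist p q ≤ dist p c from hqmin c hcA hc))
      · calc dist q (g (g t)).1 ≤ dist q c := hrmin c hcB hc
          _ < dist q p := by simpa [dist_comm] using hlt
          _ = dist p q := dist_comm _ _
  -- build the chain
  set c : ℕ → T := fun n => g^[n] ⟨a0, ha0, Or.inl ⟨ha0A, b0, hb0B, hb0⟩⟩ with hc
  have hsucc : ∀ n, c (n + 1) = g (c n) := fun n => Function.iterate_succ_apply' g n _
  refine chain_of_succ hchain (fun n => (c n).1)
    (fun n => Uinf_subset_union (c n).2.1) (fun n => ?_)
  have h1 := hdec (c n)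
  rw [← hsucc n] at h1
  simpa only [show c (n + 2) = g (c (n + 1)) from hsucc (n + 1)] using h1

variable (A B) in
lemma unmatched_amber_mem {x : Pt d} (hdisj : Disjoint A B) (hxA : x ∈ A)
    (hxu : ∀ z, ¬ Rm A B x z) : ∀ n, x ∈ US A B n := by
  intro n
  induction n with
  | zero => exact Or.inl hxA
  | succ m ih =>
    refine ⟨ih, fun y hy => hxu y ⟨m, hy⟩, fun z hz => neAB hdisj hxA hz.2.1 rfl⟩

variable (A B) in
lemma unmatched_blue_mem {y : Pt d} (hdisj : Disjoint A B) (hyB : y ∈ B)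
    (hyu : ∀ w, ¬ Rm A B w y) : ∀ n, y ∈ US A B n := by
  intro n
  induction n with
  | zero => exact Or.inr hyB
  | succ m ih =>
    refine ⟨ih, fun z hz => neAB hdisj hz.1 hyB rfl, fun w hw => hyu w ⟨m, hw⟩⟩

include hdisj hdist hchain in
lemma Rm_stable : IsTCStable A B (Rm A B) := by
  rintro ⟨x, hxA, y, hyB, hnxy, hx, hy⟩
  by_cases hxm : ∃ z, Rm A B x z
  · obtain ⟨z, n, hn⟩ := hxm
    by_cases hym : ∃ w, Rm A B w y
    · obtain ⟨w, m, hm⟩ := hym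
      rcases lt_or_ge m n with h | h
      · -- x was present at stage m, so w must beat x for y
        have hxm' : x ∈ US A B m := US_antitone h.le hn.2.2.1
        have hxw : x ≠ w := fun he => hnxy (he ▸ ⟨m, hm⟩)
        have := hm.2.2.2.2.2 x hxA hxm' hxw
        exact absurd this (not_lt.mpr (le_of_lt (hy w ⟨m, hm⟩)))
      · -- y was present at stage n, so z must beat y for x
        have hym' : y ∈ US A B n := US_antitone h hm.2.2.2.1
        have hyz : y ≠ z := fun he => hnxy (he ▸ ⟨n, hn⟩)
        have := hn.2.2.2.2.1 y hyB hym' hyz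
        exact absurd this (not_lt.mpr (le_of_lt (hx z ⟨n, hn⟩)))
    · push_neg at hym
      have hyU : y ∈ US A B n := unmatched_blue_mem A B hdisj hyB hym n
      have hyz : y ≠ z := fun he => hnxy (he ▸ ⟨n, hn⟩)
      have := hn.2.2.2.2.1 y hyB hyU hyz
      exact absurd this (not_lt.mpr (le_of_lt (hx z ⟨n, hn⟩)))
  · push_neg at hxm
    by_cases hym : ∃ w, Rm A B w y
    · obtain ⟨w, m, hm⟩ := hym
      have hxU : x ∈ US A B m := unmatched_amber_mem A B hdisj hxA hxm m
      have hxw : x ≠ w := fun he => hxm y (he ▸ ⟨m, hm⟩)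
      have := hm.2.2.2.2.2 x hxA hxU hxw
      exact absurd this (not_lt.mpr (le_of_lt (hy w ⟨m, hm⟩)))
    · push_neg at hym
      exact no_pair_Uinf hdisj hdist hchain ⟨x, hxA,
        Set.mem_iInter.mpr (unmatched_amber_mem A B hdisj hxA hxm), y, hyB,
        Set.mem_iInter.mpr (unmatched_blue_mem A B hdisj hyB hym)⟩

end STC

namespace STC

open Metric

variable {d : ℕ} {A B : Set (Pt d)}
variable (hdisj : Disjoint A B) (hdist : DistinctDist (A ∪ B)) (hchain : NoDescChain (A ∪ B))

/-- Symmetrized matching relation. -/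
def Rel (M : Pt d → Pt d → Prop) (x y : Pt d) : Prop := M x y ∨ M y x

lemma rel_symm {M : Pt d → Pt d → Prop} {x y : Pt d} (h : Rel M x y) : Rel M y x := Or.symm h

variable {M N : Pt d → Pt d → Prop}

lemma rel_memL (hM : IsTCMatching A B M) {x y : Pt d} (h : Rel M x y) :
    x ∈ A ∪ B ∧ y ∈ A ∪ B := by
  rcases h with h | h
  · exact ⟨Or.inl (hM.1 _ _ h).1, Or.inr (hM.1 _ _ h).2⟩
  · exact ⟨Or.inr (hM.1 _ _ h).2, Or.inl (hM.1 _ _ h).1⟩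

include hdisj in
lemma rel_unique (hM : IsTCMatching A B M) {x y y' : Pt d} (h : Rel M x y)
    (h' : Rel M x y') : y = y' := by
  rcases h with h | h <;> rcases h' with h' | h'
  · exact hM.2.1 _ _ _ h h'
  · exact absurd (hM.1 _ _ h).1 (fun hh => neAB hdisj hh (hM.1 _ _ h').2 rfl)
  · exact absurd (hM.1 _ _ h').1 (fun hh => neAB hdisj hh (hM.1 _ _ h).2 rfl)
  · exact hM.2.2 _ _ _ h h'

include hdisj in
lemma rel_ne (hM : IsTCMatching A B M) {x y : Pt d} (h : Rel M x y) : x ≠ y := by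
  rcases h with h | h
  · exact neAB hdisj (hM.1 _ _ h).1 (hM.1 _ _ h).2
  · exact (neAB hdisj (hM.1 _ _ h).1 (hM.1 _ _ h).2).symm

include hdisj hdist in
/-- The chase step: if `a`,`b` are `M`-matched, and `a`'s `N`-partner is farther away
than `b`, then `b` has an `N`-partner strictly closer than `a`. -/
lemma chase_step (hM : IsTCMatching A B M) (hN : IsTCMatching A B N)
    (hNs : IsTCStable A B N) {a b p : Pt d} (hab : Rel M a b)
    (hp : Rel N a p) (hpd : dist a b < dist a p) :
    ∃ b', Rel N b b' ∧ dist b b' < dist a b := by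
  have hnab : ¬ Rel N a b := fun h => absurd hpd
    (not_lt.mpr (le_of_eq (by rw [rel_unique hdisj hN h hp])))
  have haL : a ∈ A ∪ B := (rel_memL hM hab).1
  have hbL : b ∈ A ∪ B := (rel_memL hM hab).2
  have hne : a ≠ b := rel_ne hdisj hM hab
  have key : ∃ z, Rel N b z ∧ dist b z ≤ dist a b := by
    rcases hab with h | h
    · -- a ∈ A, b ∈ B
      obtain ⟨haA, hbB⟩ := hM.1 _ _ h
      by_contra hcon
      push_neg at hcon
      refine hNs ⟨a, haA, b, hbB, fun hh => hnab (Or.inl hh), fun z hz => ?_, fun z hz => ?_⟩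
      · -- z is a's N-partner: z = p
        have : z = p := rel_unique hdisj hN (Or.inl hz) hp
        exact lt_of_lt_of_le hpd (le_of_eq (by rw [this]))
      · -- z is b's N-partner
        have h1 := hcon z (Or.inr hz)
        rw [dist_comm z b]
        exact h1
    · -- b ∈ A, a ∈ B
      obtain ⟨hbA, haB⟩ := hM.1 _ _ h
      by_contra hcon
      push_neg at hcon
      refine hNs ⟨b, hbA, a, haB, fun hh => hnab (Or.inr hh), fun z hz => ?_, fun z hz => ?_⟩
      · have h1 := hcon z (Or.inl hz)
        rw [dist_comm b a]
        exact h1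
      · have : z = p := rel_unique hdisj hN (Or.inr hz) hp
        rw [dist_comm b a, dist_comm z a]
        exact lt_of_lt_of_le hpd (le_of_eq (by rw [this]))
  obtain ⟨z, hz, hzd⟩ := key
  refine ⟨z, hz, lt_of_le_of_ne hzd (fun heq => ?_)⟩
  -- distinct distances: {b,z} = {a,b} forces z = a, impossible
  have hzL : z ∈ A ∪ B := (rel_memL hN hz).2
  have hbz : b ≠ z := rel_ne hdisj hN hz
  rcases hdist b hbL z hzL a haL b hbL hbz hne heq with ⟨h1, -⟩ | ⟨-, h2⟩
  · exact hne h1.symm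
  · exact hnab (h2 ▸ Or.symm hz)

include hdisj hdist hchain in
lemma matching_unique (hM : IsTCMatching A B M) (hMs : IsTCStable A B M)
    (hN : IsTCMatching A B N) (hNs : IsTCStable A B N) {a b : Pt d}
    (hab : M a b) (hnab : ¬ N a b) : False := by
  obtain ⟨haA, hbB⟩ := hM.1 _ _ hab
  -- State: (u, v, e) where the pair (u,v) is matched in pick e, and u's other-matching
  -- partner is strictly farther than v.
  let pick : Bool → (Pt d → Pt d → Prop) := fun e => if e then N else M
  have hpick : ∀ e, IsTCMatching A B (pick e) ∧ IsTCStable A B (pick e) := by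
    intro e; cases e <;> simp [pick, hM, hMs, hN, hNs]
  let SP : Pt d × Pt d × Bool → Prop := fun s =>
    Rel (pick s.2.2) s.1 s.2.1 ∧
      ∃ p, Rel (pick (!s.2.2)) s.1 p ∧ dist s.1 s.2.1 < dist s.1 p
  have hstep : ∀ s, SP s → ∃ t, SP t ∧ t.1 = s.2.1 ∧ dist t.1 t.2.1 < dist s.1 s.2.1 := by
    rintro ⟨u, v, e⟩ ⟨h1, p, hp1, hp2⟩
    obtain ⟨b', hb'1, hb'2⟩ := chase_step hdisj hdist (hpick e).1 (hpick (!e)).1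
      (hpick (!e)).2 h1 hp1 hp2
    refine ⟨(v, b', !e), ⟨hb'1, u, ?_, ?_⟩, rfl, hb'2⟩
    · simpa [Bool.not_not, Rel] using (Or.symm h1 : Rel (pick e) v u)
    · rw [dist_comm v u]; exact hb'2
  -- initial state
  have hinit : ∃ s, SP s := by
    -- apply N-stability to (a, b)
    by_contra hcon
    push_neg at hcon
    refine hNs ⟨a, haA, b, hbB, hnab, fun z hz => ?_, fun z hz => ?_⟩
    · refine lt_of_not_ge fun hh => ?_
      have hza : a ≠ z := neAB hdisj haA (hN.1 _ _ hz).2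
      have hlt : dist a z < dist a b := lt_of_le_of_ne hh (fun heq => by
        rcases hdist a (Or.inl haA) z (Or.inr (hN.1 _ _ hz).2) a (Or.inl haA) b
          (Or.inr hbB) (fun he => hza he) (neAB hdisj haA hbB) heq with ⟨-, h2⟩ | ⟨h2, -⟩
        · exact hnab (h2 ▸ hz)
        · exact neAB hdisj haA hbB h2)
      exact hcon (a, z, true) ⟨Or.inl (by simpa [pick] using hz),
        b, Or.inl (by simpa [pick] using hab), hlt⟩
    · refine lt_of_not_ge fun hh => ?_
      have hza : z ≠ a := fun he => hnab (he ▸ hz)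
      have hlt : dist z b < dist a b := lt_of_le_of_ne hh (fun heq => by
        rcases hdist z (Or.inl (hN.1 _ _ hz).1) b (Or.inr hbB) a (Or.inl haA) b
          (Or.inr hbB) (neAB hdisj (hN.1 _ _ hz).1 hbB) (neAB hdisj haA hbB) heq with
          ⟨h2, -⟩ | ⟨h2, -⟩
        · exact hza h2
        · exact neAB hdisj (hN.1 _ _ hz).1 hbB h2)
      exact hcon (b, z, true) ⟨Or.inr (by simpa [pick] using hz),
        a, Or.inr (by simpa [pick] using hab),
        by rw [dist_comm b z, dist_comm b a]; exact hlt⟩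
  obtain ⟨s0, hs0⟩ := hinit
  -- build the chain
  choose f hf1 hf2 hf3 using hstep
  let g : {s // SP s} → {s // SP s} := fun s => ⟨f s.1 s.2, hf1 s.1 s.2⟩
  let c : ℕ → {s // SP s} := fun n => g^[n] ⟨s0, hs0⟩
  have hsucc : ∀ n, c (n + 1) = g (c n) := fun n => Function.iterate_succ_apply' g n _
  have hmem : ∀ n, (c n).1.1 ∈ A ∪ B := fun n =>
    (rel_memL (hpick (c n).1.2.2).1 (c n).2.1).1
  have hkey : ∀ n, (c (n + 1)).1.1 = (c n).1.2.1 := fun n => by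
    rw [hsucc n]; exact hf2 (c n).1 (c n).2
  have hdec : ∀ n, dist (c (n + 1)).1.1 (c (n + 1)).1.2.1 < dist (c n).1.1 (c n).1.2.1 :=
    fun n => by rw [hsucc n]; exact hf3 (c n).1 (c n).2
  refine chain_of_succ hchain (fun n => (c n).1.1) hmem (fun n => ?_)
  rw [hkey (n + 1), hkey n]
  have h1 := hdec n
  rw [hkey n] at h1
  exact h1

end STC

/-- if `A` and `B` are disjoint and `A ∪ B` has distinct distances and no
infinite descending chains, then there is a unique stable two-color matching of `(A, B)`,
and its unmatched points all lie in the same one of the two sets. -/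
theorem exists_unique_stable_two_color_matching {d : ℕ} (A B : Set (Pt d))
    (hdisj : Disjoint A B) (hdist : DistinctDist (A ∪ B)) (hchain : NoDescChain (A ∪ B)) :
    (∃! R : Pt d → Pt d → Prop, IsTCMatching A B R ∧ IsTCStable A B R) ∧
    ∀ R : Pt d → Pt d → Prop, IsTCMatching A B R → IsTCStable A B R →
      ¬ ((∃ x ∈ A, ∀ y, ¬ R x y) ∧ (∃ y ∈ B, ∀ x, ¬ R x y)) := by
  constructor
  · refine ⟨STC.Rm A B, ⟨STC.Rm_matching, STC.Rm_stable hdisj hdist hchain⟩, ?_⟩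
    rintro R ⟨hR, hRs⟩
    funext x y
    apply propext
    constructor
    · intro h
      by_contra hn
      exact STC.matching_unique hdisj hdist hchain hR hRs STC.Rm_matching
        (STC.Rm_stable hdisj hdist hchain) h hn
    · intro h
      by_contra hn
      exact STC.matching_unique hdisj hdist hchain STC.Rm_matching
        (STC.Rm_stable hdisj hdist hchain) hR hRs h hn
  · rintro R hR hRs ⟨⟨x, hx, hxu⟩, ⟨y, hy, hyu⟩⟩
    exact hRs ⟨x, hx, y, hy, hxu y, fun z hz => absurd hz (hxu z),
      fun z hz => absurd hz (hyu z)⟩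
end
end

section
/- Let L_A and L_B be disjoint subsets of ℝ^d whose union L = L_A ∪ L_B has distinct distances and no infinite descending chains, and let M be the unique stable two-color matching of (L_A, L_B). In the colored friendly frogs game on colored points, a position (x,y) (with x and y in different sets, y the frog of the player about to move) is a P-position if and only if x desires y, i.e., |x − y| ≤ |x − M(x)|. -/
noncomputable section

/-- The move relation of colored friendly frogs on colored points `(A, B)`.  Positions are
ordered pairs `(x, y)` of points of opposite colors, `y` being the frog of the player
about to move; a legal move goes to `(z, x)` where `z ≠ y` has the same color as `y` and
`dist z x < dist x y`. -/
def CPMove {d : ℕ} (A B : Set (Pt d)) (p q : Pt d × Pt d) : Prop :=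
  ∃ x y z, p = (x, y) ∧ q = (z, x) ∧ z ≠ y ∧ dist z x < dist x y ∧
    ((x ∈ A ∧ y ∈ B ∧ z ∈ B) ∨ (x ∈ B ∧ y ∈ A ∧ z ∈ A))

/-- let `A`, `B` be disjoint with `A ∪ B` having distinct distances and no
infinite descending chains, let `R` be the (unique) stable two-color matching of `(A, B)`,
and let `P` be the P-position predicate of colored friendly frogs on colored points (any
predicate satisfying the defining fixpoint equation, which determines it uniquely by
well-foundedness).  Then a position `(x, y)` with `x`, `y` of opposite colors is a
P-position if and only if `x` desires `y`, i.e. `dist x y ≤ dist x (M x)` (the right side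
being `∞` if `x` is unmatched). -/
theorem colored_points_ppositions_iff_desire {d : ℕ} (A B : Set (Pt d))
    (hdisj : Disjoint A B) (hdist : DistinctDist (A ∪ B)) (hchain : NoDescChain (A ∪ B))
    (R : Pt d → Pt d → Prop) (hM : IsTCMatching A B R) (hS : IsTCStable A B R)
    (P : Pt d × Pt d → Prop)
    (hP : ∀ x y, (x ∈ A ∧ y ∈ B) ∨ (x ∈ B ∧ y ∈ A) →
      (P (x, y) ↔ ∀ q, CPMove A B (x, y) q → ¬ P q)) :
    ∀ x y, (x ∈ A ∧ y ∈ B) ∨ (x ∈ B ∧ y ∈ A) →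
      (P (x, y) ↔ ∀ z, R x z ∨ R z x → dist x y ≤ dist x z) := by
  classical
  obtain ⟨hmem, huA, huB⟩ := hM
  have hAB : ∀ {a : Pt d}, a ∈ A → a ∉ B := fun ha => Set.disjoint_left.mp hdisj ha
  -- Well-foundedness of the move relation
  set r : Pt d × Pt d → Pt d × Pt d → Prop := fun q p => CPMove A B p q with hr
  have hwf : WellFounded r := by
    by_contra hw
    have hex : ∃ a, ¬ Acc r a := by
      by_contra h
      push_neg at h
      exact hw ⟨h⟩
    obtain ⟨a, ha⟩ := hex
    have H : ∀ x : {a : Pt d × Pt d // ¬ Acc r a}, ∃ y : {a // ¬ Acc r a}, r y.1 x.1 := by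
      rintro ⟨x, hx⟩
      obtain ⟨w, hw1, hw2⟩ := exists_not_acc_lt_of_not_acc hx
      exact ⟨⟨w, hw1⟩, hw2⟩
    choose f hf using H
    set g : ℕ → {a : Pt d × Pt d // ¬ Acc r a} := fun n => f^[n] ⟨a, ha⟩ with hg
    have hgm : ∀ n, CPMove A B (g n).1 (g (n + 1)).1 := by
      intro n
      have : g (n + 1) = f (g n) := Function.iterate_succ_apply' f n _
      rw [this]
      exact hf (g n)
    -- extract structure of each move
    have key : ∀ n, (g (n + 1)).1.2 = (g n).1.1 ∧
        dist (g (n + 1)).1.1 (g (n + 1)).1.2 < dist (g n).1.1 (g n).1.2 ∧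
        (g n).1.1 ∈ A ∪ B ∧ (g n).1.2 ∈ A ∪ B := by
      intro n
      obtain ⟨x, y, z, hp, hq, hzy, hlt, hcol⟩ := hgm n
      have h1 : (g n).1.1 = x := by rw [hp]
      have h2 : (g n).1.2 = y := by rw [hp]
      have h3 : (g (n + 1)).1.1 = z := by rw [hq]
      have h4 : (g (n + 1)).1.2 = x := by rw [hq]
      refine ⟨by rw [h4, h1], by rw [h1, h2, h3, h4]; exact hlt, ?_, ?_⟩
      · rw [h1]; rcases hcol with ⟨hx, _, _⟩ | ⟨hx, _, _⟩
        · exact Or.inl hx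
        · exact Or.inr hx
      · rw [h2]; rcases hcol with ⟨_, hy, _⟩ | ⟨_, hy, _⟩
        · exact Or.inr hy
        · exact Or.inl hy
    set c : ℕ → Pt d := fun n => Nat.rec ((g 0).1.2) (fun k _ => (g k).1.1) n with hc
    have hc0 : c 0 = (g 0).1.2 := rfl
    have hcs : ∀ k, c (k + 1) = (g k).1.1 := fun k => rfl
    apply hchain
    refine ⟨c, ?_, ?_⟩
    · intro n
      cases n with
      | zero => rw [hc0]; exact (key 0).2.2.2
      | succ k => rw [hcs]; exact (key k).2.2.1
    · have hdis : ∀ n, dist (c n) (c (n + 1)) = dist (g n).1.1 (g n).1.2 := by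
        intro n
        cases n with
        | zero => rw [hc0, hcs]; exact dist_comm _ _
        | succ k =>
          rw [hcs, hcs, ← (key k).1]
          exact dist_comm _ _
      apply strictAnti_nat_of_succ_lt
      intro n
      rw [hdis n, hdis (n + 1)]
      exact (key n).2.1
  -- Main induction
  suffices H : ∀ p : Pt d × Pt d, ((p.1 ∈ A ∧ p.2 ∈ B) ∨ (p.1 ∈ B ∧ p.2 ∈ A)) →
      (P p ↔ ∀ z, R p.1 z ∨ R z p.1 → dist p.1 p.2 ≤ dist p.1 z) by
    intro x y h
    exact H (x, y) h
  intro p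
  induction p using hwf.induction with
  | _ p IH =>
  intro hcol
  obtain ⟨x, y⟩ := p
  simp only at hcol ⊢
  constructor
  · -- P → desire
    intro hPp z hz
    by_contra hlt
    push_neg at hlt
    rcases hcol with ⟨hxA, hyB⟩ | ⟨hxB, hyA⟩
    · -- x ∈ A : the partner witness must be R x z
      have hRxz : R x z := by
        rcases hz with h | h
        · exact h
        · exact absurd (hmem _ _ h).2 (hAB hxA)
      have hzB : z ∈ B := (hmem _ _ hRxz).2
      have hzy : z ≠ y := by
        rintro rfl
        exact lt_irrefl _ hlt
      have hmove : CPMove A B (x, y) (z, x) :=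
        ⟨x, y, z, rfl, rfl, hzy, by rw [dist_comm]; exact hlt, Or.inl ⟨hxA, hyB, hzB⟩⟩
      have hPq : P (z, x) := by
        refine (IH (z, x) hmove (Or.inr ⟨hzB, hxA⟩)).mpr ?_
        intro w hw
        have hwx : w = x := by
          rcases hw with h | h
          · exact absurd hzB (hAB (hmem _ _ h).1)
          · exact huB _ _ _ h hRxz
        rw [hwx]
      exact (hP x y (Or.inl ⟨hxA, hyB⟩)).mp hPp (z, x) hmove hPq
    · -- x ∈ B : the partner witness must be R z x
      have hRzx : R z x := by
        rcases hz with h | h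
        · exact absurd hxB (hAB (hmem _ _ h).1)
        · exact h
      have hzA : z ∈ A := (hmem _ _ hRzx).1
      have hzy : z ≠ y := by
        rintro rfl
        exact lt_irrefl _ hlt
      have hmove : CPMove A B (x, y) (z, x) :=
        ⟨x, y, z, rfl, rfl, hzy, by rw [dist_comm]; exact hlt, Or.inr ⟨hxB, hyA, hzA⟩⟩
      have hPq : P (z, x) := by
        refine (IH (z, x) hmove (Or.inl ⟨hzA, hxB⟩)).mpr ?_
        intro w hw
        have hwx : w = x := by
          rcases hw with h | h
          · exact huA _ _ _ h hRzx
          · exact absurd (hmem _ _ h).2 (hAB hzA)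
        rw [hwx]
      exact (hP x y (Or.inr ⟨hxB, hyA⟩)).mp hPp (z, x) hmove hPq
  · -- desire → P
    intro hdes
    refine (hP x y hcol).mpr ?_
    rintro q ⟨x', y', z, hp, hq, hzy, hlt, hcolm⟩ hPq
    injection hp with h1 h2
    subst h1; subst h2; subst hq
    rcases hcolm with ⟨hxA, hyB, hzB⟩ | ⟨hxB, hyA, hzA⟩
    · -- blocking pair (x, z) with x ∈ A, z ∈ B
      have hqdes := (IH (z, x) ⟨x, y, z, rfl, rfl, hzy, hlt, Or.inl ⟨hxA, hyB, hzB⟩⟩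
        (Or.inr ⟨hzB, hxA⟩)).mp hPq
      have hnRxz : ¬ R x z := by
        intro h
        exact absurd (hdes z (Or.inl h)) (not_le.mpr (by rw [dist_comm x z]; exact hlt))
      refine hS ⟨x, hxA, z, hzB, hnRxz, ?_, ?_⟩
      · intro w hw
        have h1 := hdes w (Or.inl hw)
        rw [dist_comm] at hlt
        exact lt_of_lt_of_le hlt h1
      · intro w hw
        have hwA : w ∈ A := (hmem _ _ hw).1
        have h1 : dist z x ≤ dist z w := hqdes w (Or.inr hw)
        have h2 : dist z x ≠ dist z w := by
          intro he
          have hzx : z ≠ x := fun h => hAB hxA (h ▸ hzB)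
          have hzw : z ≠ w := fun h => hAB hwA (h ▸ hzB)
          rcases hdist z (Or.inr hzB) x (Or.inl hxA) z (Or.inr hzB) w (Or.inl hwA)
              hzx hzw he with ⟨_, hxw⟩ | ⟨hzw', _⟩
          · exact hnRxz (hxw ▸ hw)
          · exact hzw hzw'
        rw [dist_comm x z, dist_comm w z]
        exact lt_of_le_of_ne h1 h2
    · -- blocking pair (z, x) with z ∈ A, x ∈ B
      have hqdes := (IH (z, x) ⟨x, y, z, rfl, rfl, hzy, hlt, Or.inr ⟨hxB, hyA, hzA⟩⟩
        (Or.inl ⟨hzA, hxB⟩)).mp hPq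
      have hnRzx : ¬ R z x := by
        intro h
        exact absurd (hdes z (Or.inr h)) (not_le.mpr (by rw [dist_comm x z]; exact hlt))
      refine hS ⟨z, hzA, x, hxB, hnRzx, ?_, ?_⟩
      · intro w hw
        have hwB : w ∈ B := (hmem _ _ hw).2
        have h1 : dist z x ≤ dist z w := hqdes w (Or.inl hw)
        have h2 : dist z x ≠ dist z w := by
          intro he
          have hzx : z ≠ x := fun h => hAB hzA (h ▸ hxB)
          have hzw : z ≠ w := fun h => hAB hzA (h ▸ hwB)
          rcases hdist z (Or.inl hzA) x (Or.inr hxB) z (Or.inl hzA) w (Or.inr hwB)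
              hzx hzw he with ⟨_, hxw⟩ | ⟨hzw', _⟩
          · exact hnRzx (hxw ▸ hw)
          · exact hzw hzw'
        exact lt_of_le_of_ne h1 h2
      · intro w hw
        have h1 := hdes w (Or.inr hw)
        rw [dist_comm z x, dist_comm w x]
        rw [dist_comm] at hlt
        exact lt_of_lt_of_le hlt h1
end
end

section
/- Let L ⊂ ℝ^d have distinct distances and no infinite descending chains. Then there exists a unique matching M̃ of L that matches no mutually nearest pair and is stable subject to this restriction. Moreover M̃ leaves at most two points of L unmatched, and if it leaves exactly two points unmatched then those two points are mutually nearest points of L. -/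
noncomputable section

/-- `x` and `y` are distinct points of `L` that are each other's (unique) nearest points
of `L`. -/
def MutuallyNearest {d : ℕ} (L : Set (Pt d)) (x y : Pt d) : Prop :=
  x ∈ L ∧ y ∈ L ∧ x ≠ y ∧
  (∀ z ∈ L, z ≠ x → z ≠ y → dist x y < dist x z) ∧
  (∀ z ∈ L, z ≠ x → z ≠ y → dist x y < dist y z)

/-- The matching `R` of `L` is stable subject to the restriction that mutually nearest
points cannot be matched: there are no distinct points `x, y ∈ L` that are not mutually
nearest and not matched to each other, each of which is unmatched or strictly farther
from its partner than from the other point. -/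
def IsRestrictedStable {d : ℕ} (L : Set (Pt d)) (R : Pt d → Pt d → Prop) : Prop :=
  ¬ ∃ x ∈ L, ∃ y ∈ L, x ≠ y ∧ ¬ MutuallyNearest L x y ∧ ¬ R x y ∧
    (∀ z, R x z → dist x y < dist x z) ∧ (∀ z, R y z → dist x y < dist y z)

namespace StableAux

variable {d : ℕ}

/-- A relation with no infinite descending sequences is well-founded. -/
theorem wf_of_no_desc {α : Type*} {r : α → α → Prop}
    (h : ¬ ∃ f : ℕ → α, ∀ n, r (f (n + 1)) (f n)) : WellFounded r := by
  by_contra hwf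
  have hex : ∃ a, ¬ Acc r a := by
    by_contra ha
    push_neg at ha
    exact hwf ⟨ha⟩
  obtain ⟨a, ha⟩ := hex
  have step : ∀ x : {x : α // ¬ Acc r x}, ∃ y : {x : α // ¬ Acc r x}, r y.1 x.1 := by
    rintro ⟨x, hx⟩
    by_contra hy
    push_neg at hy
    exact hx (Acc.intro x (fun y hyx => by
      by_contra hacc
      exact hy ⟨y, hacc⟩ hyx))
  let g : ℕ → {x : α // ¬ Acc r x} := fun n =>
    Nat.rec ⟨a, ha⟩ (fun _ p => Classical.choose (step p)) n
  refine h ⟨fun n => (g n).1, fun n => ?_⟩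
  exact Classical.choose_spec (step (g n))

variable {d : ℕ}

/-- The auxiliary well-founded relation on ordered pairs of points. -/
def Rel (L : Set (Pt d)) (q p : Pt d × Pt d) : Prop :=
  q.1 ∈ L ∧ q.2 ∈ L ∧
    ((q.1 = p.2 ∧ dist q.1 q.2 < dist p.1 p.2) ∨
     (∃ u, (u = p.1 ∨ u = p.2) ∧ dist q.1 q.2 < dist u q.1 ∧
        dist u q.1 < dist p.1 p.2))

section Walk

variable (f : ℕ → Pt d × Pt d)

def ExA (n : ℕ) : Prop :=
  ∃ u, (u = (f n).1 ∨ u = (f n).2) ∧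
    dist (f (n+1)).1 (f (n+1)).2 < dist u (f (n+1)).1 ∧
    dist u (f (n+1)).1 < dist (f n).1 (f n).2

open Classical in
def uu (n : ℕ) : Pt d :=
  if h : ExA f n then h.choose else (f n).1

lemma uu_specA {n : ℕ} (h : ExA f n) :
    (uu f n = (f n).1 ∨ uu f n = (f n).2) ∧
    dist (f (n+1)).1 (f (n+1)).2 < dist (uu f n) (f (n+1)).1 ∧
    dist (uu f n) (f (n+1)).1 < dist (f n).1 (f n).2 := by
  rw [uu, dif_pos h]
  exact h.choose_spec

lemma uu_specB {n : ℕ} (h : ¬ ExA f n) : uu f n = (f n).1 := dif_neg h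

open Classical in
def nxt (s : ℕ × Bool) : ℕ × Bool :=
  match s with
  | (n, false) => if uu f n ≠ (f n).1 ∧ uu f n ≠ (f (n+1)).1 then (n, true) else (n+1, false)
  | (n, true) => (n+1, false)

def posn (s : ℕ × Bool) : Pt d :=
  match s with
  | (n, false) => (f n).1
  | (n, true) => uu f n

def len (s : ℕ × Bool) : ℝ := dist (posn f s) (posn f (nxt f s))

variable {L : Set (Pt d)}
variable (hf : ∀ n, Rel L (f (n + 1)) (f n))

include hf

lemma relB {n : ℕ} (h : ¬ ExA f n) :
    (f (n+1)).1 = (f n).2 ∧ dist (f (n+1)).1 (f (n+1)).2 < dist (f n).1 (f n).2 := by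
  rcases (hf n).2.2 with h1 | h2
  · exact h1
  · exact absurd h2 h

lemma len_false (n : ℕ) :
    dist (f (n+1)).1 (f (n+1)).2 < len f (n, false) ∧
    len f (n, false) ≤ dist (f n).1 (f n).2 := by
  classical
  simp only [len, nxt]
  split_ifs with hg
  · -- goes to (n, true); len = dist (f n).1 (uu f n)
    simp only [posn]
    by_cases h : ExA f n
    · rcases uu_specA f h with ⟨hu, h1, h2⟩
      rcases hu with hu | hu
      · exact absurd hu hg.1
      · rw [hu]
        exact ⟨lt_trans h1 h2, le_refl _⟩
    · exact absurd (uu_specB f h) hg.1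
  · -- goes to (n+1, false); len = dist (f n).1 (f (n+1)).1
    simp only [posn]
    by_cases h : ExA f n
    · rcases uu_specA f h with ⟨hu, h1, h2⟩
      by_cases h0 : uu f n = (f n).1
      · rw [h0] at h1 h2
        exact ⟨h1, le_of_lt h2⟩
      · -- then uu f n = (f (n+1)).1 (from ¬guard)
        have h1' : uu f n = (f (n+1)).1 := by
          rcases not_and_or.mp hg with hc | hc
          · exact absurd (not_not.mp hc) h0
          · exact not_not.mp hc
        exfalso
        rw [h1'] at h1
        simp only [dist_self] at h1
        exact absurd h1 (not_lt.mpr dist_nonneg)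
    · rcases relB f hf h with ⟨he, hlt⟩
      have e2 : dist (f n).1 (f (n+1)).1 = dist (f n).1 (f n).2 := by rw [he]
      rw [e2]
      exact ⟨hlt, le_refl _⟩

lemma len_true_gt (n : ℕ) :
    dist (f (n+1)).1 (f (n+1)).2 < len f (n, true) := by
  simp only [len, nxt, posn]
  by_cases h : ExA f n
  · exact (uu_specA f h).2.1
  · rcases relB f hf h with ⟨he, hlt⟩
    have e2 : dist (uu f n) ((f (n+1)).1) = dist (f n).1 (f n).2 := by
      rw [uu_specB f h, he]
    rw [e2]
    exact hlt

lemma trans_lt (s : ℕ × Bool) : len f (nxt f s) < len f s := by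
  classical
  obtain ⟨n, b⟩ := s
  cases b
  · by_cases hg : uu f n ≠ (f n).1 ∧ uu f n ≠ (f (n+1)).1
    · have hnxt : nxt f (n, false) = (n, true) := by simp only [nxt, if_pos hg]
      rw [hnxt]
      -- need len (n,true) < len (n,false)
      by_cases h : ExA f n
      · rcases uu_specA f h with ⟨hu, h1, h2⟩
        rcases hu with hu | hu
        · exact absurd hu hg.1
        · have e1 : len f (n, false) = dist (f n).1 (f n).2 := by
            simp only [len, hnxt, posn]
            rw [hu]
          have e2 : len f (n, true) = dist (uu f n) ((f (n+1)).1) := by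
            simp only [len, nxt, posn]
          rw [e1, e2]
          exact h2
      · exact absurd (uu_specB f h) hg.1
    · have hnxt : nxt f (n, false) = (n+1, false) := by simp only [nxt, if_neg hg]
      rw [hnxt]
      exact lt_of_le_of_lt (len_false f hf (n+1)).2 (len_false f hf n).1
  · have hnxt : nxt f (n, true) = (n+1, false) := rfl
    rw [hnxt]
    exact lt_of_le_of_lt (len_false f hf (n+1)).2 (len_true_gt f hf n)

omit hf

def msr (s : ℕ × Bool) : ℕ := 2 * s.1 + (cond s.2 1 0)

lemma msr_lt (s : ℕ × Bool) : msr s < msr (nxt f s) := by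
  classical
  obtain ⟨n, b⟩ := s
  cases b
  · by_cases hg : uu f n ≠ (f n).1 ∧ uu f n ≠ (f (n+1)).1
    · rw [show nxt f (n, false) = (n, true) by simp only [nxt, if_pos hg]]
      simp only [msr, Bool.cond_true, Bool.cond_false]
      omega
    · rw [show nxt f (n, false) = (n+1, false) by simp only [nxt, if_neg hg]]
      simp only [msr, Bool.cond_true, Bool.cond_false]
      omega
  · show msr (n, true) < msr (n+1, false)
    simp only [msr, Bool.cond_true, Bool.cond_false]
    omega

def traj (k : ℕ) : ℕ × Bool := (nxt f)^[k] (0, false)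

lemma traj_succ (k : ℕ) : traj f (k+1) = nxt f (traj f k) :=
  Function.iterate_succ_apply' _ _ _

lemma msr_traj (k : ℕ) : k ≤ msr (traj f k) := by
  induction k with
  | zero => exact Nat.zero_le _
  | succ k ih =>
      rw [traj_succ]
      exact lt_of_le_of_lt ih (msr_lt f (traj f k))

lemma traj_fst_ge (k : ℕ) (hk : 3 ≤ k) : 1 ≤ (traj f k).1 := by
  have h := msr_traj f k
  unfold msr at h
  have hb : (bif (traj f k).2 then 1 else 0) ≤ 1 := by
    cases (traj f k).2 <;> simp
  omega

include hf

lemma mem_f {n : ℕ} (h : 1 ≤ n) : (f n).1 ∈ L ∧ (f n).2 ∈ L := by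
  cases n with
  | zero => omega
  | succ m => exact ⟨(hf m).1, (hf m).2.1⟩

lemma posn_mem (s : ℕ × Bool) (h : 1 ≤ s.1) : posn f s ∈ L := by
  obtain ⟨n, b⟩ := s
  cases b
  · exact (mem_f f hf h).1
  · simp only [posn]
    by_cases hA : ExA f n
    · rcases (uu_specA f hA).1 with hu | hu <;> rw [hu]
      · exact (mem_f f hf h).1
      · exact (mem_f f hf h).2
    · rw [uu_specB f hA]
      exact (mem_f f hf h).1

omit hf

theorem rel_wf (L : Set (Pt d)) (hch : NoDescChain L) : WellFounded (Rel L) := by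
  apply wf_of_no_desc
  rintro ⟨f, hf⟩
  apply hch
  refine ⟨fun k => posn f (traj f (k + 3)), fun k => ?_, ?_⟩
  · exact posn_mem f hf _ (traj_fst_ge f _ (by omega))
  · apply strictAnti_nat_of_succ_lt
    intro k
    have e : ∀ j, dist (posn f (traj f (j+3))) (posn f (traj f (j+1+3))) = len f (traj f (j+3)) := by
      intro j
      have : traj f (j+1+3) = nxt f (traj f (j+3)) := by
        have : j+1+3 = (j+3)+1 := by omega
        rw [this, traj_succ]
      rw [this]
      rfl
    simp only [e]
    rw [show k+1+3 = (k+3)+1 from rfl, traj_succ]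
    exact trans_lt f hf (traj f (k+3))

end Walk

variable {L : Set (Pt d)}

lemma loc_fin (hch : NoDescChain L) (x₀ : Pt d) (r : ℝ) :
    (L ∩ Metric.closedBall x₀ r).Finite := by
  by_contra hinf
  have hinf' : (L ∩ Metric.closedBall x₀ r).Infinite := hinf
  let g : ℕ ↪ (L ∩ Metric.closedBall x₀ r : Set (Pt d)) := hinf'.natEmbedding
  have hb : ∀ n : ℕ, (g n : Pt d) ∈ Metric.closedBall x₀ r := fun n => (g n).2.2
  obtain ⟨a, -, φ, hφ, hconv⟩ :=
    (isCompact_closedBall x₀ r).tendsto_subseq hb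
  have hyinj : Function.Injective (fun k => ((g (φ k) : Pt d))) := by
    intro i j hij
    exact hφ.injective (g.injective (Subtype.ext hij))
  have hymem : ∀ k, ((g (φ k)) : Pt d) ∈ L := fun k => (g (φ k)).2.1
  -- key approximation property
  have key : ∀ ε : ℝ, 0 < ε → ∃ z, z ∈ L ∧ z ≠ a ∧ dist z a < ε := by
    intro ε hε
    rw [Metric.tendsto_atTop] at hconv
    obtain ⟨N, hN⟩ := hconv ε hε
    have h1 := hN N (le_refl N)
    have h2 := hN (N + 1) (Nat.le_succ N)
    by_cases ha : ((g (φ N)) : Pt d) = a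
    · refine ⟨(g (φ (N + 1)) : Pt d), hymem _, ?_, h2⟩
      intro he
      have : N = N + 1 := hyinj (by simp only []; rw [he, ha])
      omega
    · exact ⟨(g (φ N) : Pt d), hymem _, ha, h1⟩
  -- build the descending chain
  have step : ∀ z : {z : Pt d // z ∈ L ∧ z ≠ a},
      ∃ w : {z : Pt d // z ∈ L ∧ z ≠ a}, dist w.1 a < dist z.1 a / 4 := by
    rintro ⟨z, hzL, hza⟩
    have hpos : 0 < dist z a / 4 := by
      have := dist_pos.mpr hza
      linarith
    obtain ⟨w, hwL, hwa, hwd⟩ := key _ hpos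
    exact ⟨⟨w, hwL, hwa⟩, hwd⟩
  obtain ⟨z0, hz0L, hz0a, -⟩ := key 1 one_pos
  let c : ℕ → {z : Pt d // z ∈ L ∧ z ≠ a} := fun n =>
    Nat.rec ⟨z0, hz0L, hz0a⟩ (fun _ p => Classical.choose (step p)) n
  have hcstep : ∀ n, dist (c (n+1)).1 a < dist (c n).1 a / 4 := fun n =>
    Classical.choose_spec (step (c n))
  have hpos : ∀ n, 0 < dist (c n).1 a := fun n => dist_pos.mpr (c n).2.2
  apply hch
  refine ⟨fun n => (c n).1, fun n => (c n).2.1, ?_⟩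
  apply strictAnti_nat_of_succ_lt
  intro n
  have h1 := hcstep n
  have h2 := hcstep (n + 1)
  have l1 : dist (c (n+1)).1 (c (n+2)).1 ≤ dist (c (n+1)).1 a + dist (c (n+2)).1 a := by
    rw [dist_comm (c (n+2)).1 a]
    exact dist_triangle _ _ _
  have l2 : dist (c n).1 a ≤ dist (c n).1 (c (n+1)).1 + dist (c (n+1)).1 a :=
    dist_triangle _ _ _
  have p0 := hpos n
  have p1 := hpos (n + 1)
  have p2 := hpos (n + 2)
  show dist (c (n+1)).1 (c (n+1+1)).1 < dist (c n).1 (c (n+1)).1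
  have : (n+1+1) = n+2 := rfl
  rw [this]
  linarith


variable (L : Set (Pt d))

def GoodF (p : Pt d × Pt d) (IH : ∀ q, Rel L q p → Prop) : Prop :=
  p.1 ∈ L ∧ p.2 ∈ L ∧ p.1 ≠ p.2 ∧ ¬ MutuallyNearest L p.1 p.2 ∧
  (∀ z, ∀ hz : z ∈ L, z ≠ p.1 → ¬ MutuallyNearest L p.1 z →
    ∀ hlt : dist p.1 z < dist p.1 p.2,
    ∃ w, ∃ h : w ∈ L ∧ dist z w < dist p.1 z,
      IH (z, w) ⟨hz, h.1, Or.inr ⟨p.1, Or.inl rfl, h.2, hlt⟩⟩) ∧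
  (∀ z, ∀ hz : z ∈ L, z ≠ p.2 → ¬ MutuallyNearest L p.2 z →
    ∀ hlt : dist p.2 z < dist p.1 p.2,
    ∃ w, ∃ h : w ∈ L ∧ dist z w < dist p.2 z,
      IH (z, w) ⟨hz, h.1, Or.inr ⟨p.2, Or.inr rfl, h.2, hlt⟩⟩)

def Good (hch : NoDescChain L) : Pt d × Pt d → Prop :=
  (rel_wf L hch).fix (GoodF L)

variable {L} (hch : NoDescChain L)

def SideC (a b : Pt d) : Prop :=
  ∀ z, z ∈ L → z ≠ a → ¬ MutuallyNearest L a z → dist a z < dist a b →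
    ∃ w, w ∈ L ∧ dist z w < dist a z ∧ Good L hch (z, w)

lemma good_iff (x y : Pt d) :
    Good L hch (x, y) ↔
      (x ∈ L ∧ y ∈ L ∧ x ≠ y ∧ ¬ MutuallyNearest L x y ∧
        SideC hch x y ∧ SideC hch y x) := by
  have h0 : Good L hch (x, y) = GoodF L (x, y) (fun q _ => Good L hch q) := by
    unfold Good
    exact WellFounded.fix_eq _ _ _
  rw [h0]
  unfold GoodF SideC
  simp only [exists_prop]
  constructor
  · rintro ⟨h1, h2, h3, h4, h5, h6⟩
    refine ⟨h1, h2, h3, h4, ?_, ?_⟩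
    · intro z hz hzx hmn hlt
      obtain ⟨w, hw, hgw⟩ := h5 z hz hzx hmn hlt
      exact ⟨w, hw.1, hw.2, hgw⟩
    · intro z hz hzy hmn hlt
      rw [dist_comm y x] at hlt
      obtain ⟨w, hw, hgw⟩ := h6 z hz hzy hmn hlt
      exact ⟨w, hw.1, hw.2, hgw⟩
  · rintro ⟨h1, h2, h3, h4, h5, h6⟩
    refine ⟨h1, h2, h3, h4, ?_, ?_⟩
    · intro z hz hzx hmn hlt
      obtain ⟨w, hw1, hw2, hgw⟩ := h5 z hz hzx hmn hlt
      exact ⟨w, ⟨hw1, hw2⟩, hgw⟩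
    · intro z hz hzy hmn hlt
      obtain ⟨w, hw1, hw2, hgw⟩ := h6 z hz hzy hmn (by rw [dist_comm y x]; exact hlt)
      exact ⟨w, ⟨hw1, hw2⟩, hgw⟩

lemma mn_symm {x y : Pt d} (h : MutuallyNearest L x y) : MutuallyNearest L y x := by
  obtain ⟨h1, h2, h3, h4, h5⟩ := h
  refine ⟨h2, h1, h3.symm, ?_, ?_⟩
  · intro z hz hzy hzx
    rw [dist_comm y x]
    exact h5 z hz hzx hzy
  · intro z hz hzy hzx
    rw [dist_comm y x]
    exact h4 z hz hzx hzy

lemma good_symm {x y : Pt d} (h : Good L hch (x, y)) : Good L hch (y, x) := by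
  rw [good_iff] at h ⊢
  obtain ⟨h1, h2, h3, h4, h5, h6⟩ := h
  exact ⟨h2, h1, h3.symm, fun hmn => h4 (mn_symm hmn), h6, h5⟩

lemma good_mem {x y : Pt d} (h : Good L hch (x, y)) :
    x ∈ L ∧ y ∈ L ∧ x ≠ y ∧ ¬ MutuallyNearest L x y :=
  let h' := (good_iff hch x y).mp h
  ⟨h'.1, h'.2.1, h'.2.2.1, h'.2.2.2.1⟩

lemma good_func_aux (hdist : DistinctDist L) :
    ∀ p : Pt d × Pt d, Good L hch p → ∀ z, Good L hch (p.1, z) →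
      dist p.1 p.2 < dist p.1 z → False := by
  intro p
  induction p using (rel_wf L hch).induction with
  | _ p IH =>
  obtain ⟨x, y⟩ := p
  intro hxy z hxz hlt
  have hmemxy := good_mem hch hxy
  have hmemxz := good_mem hch hxz
  -- side condition of (x, z) at the point y
  obtain ⟨w, hwL, hdw, hgw⟩ :=
    ((good_iff hch x z).mp hxz).2.2.2.2.1 y hmemxy.2.1 hmemxy.2.2.1.symm
      hmemxy.2.2.2 hlt
  -- now Good (y, w) with dist y w < dist x y, and Good (y, x)
  have hrel : Rel L (y, w) (x, y) :=
    ⟨hmemxy.2.1, hwL, Or.inl ⟨rfl, hdw⟩⟩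
  exact IH (y, w) hrel hgw x (good_symm hch hxy)
    (lt_of_lt_of_le hdw (by rw [dist_comm]))

lemma good_func (hdist : DistinctDist L) {x y z : Pt d}
    (hxy : Good L hch (x, y)) (hxz : Good L hch (x, z)) : y = z := by
  by_contra hne
  have hm1 := good_mem hch hxy
  have hm2 := good_mem hch hxz
  rcases lt_trichotomy (dist x y) (dist x z) with h | h | h
  · exact good_func_aux hch hdist (x, y) hxy z hxz h
  · rcases hdist x hm1.1 y hm1.2.1 x hm1.1 z hm2.2.1 hm1.2.2.1 hm2.2.2.1 h with
      ⟨_, h2⟩ | ⟨h1, h2⟩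
    · exact hne h2
    · exact hm2.2.2.1 h1
  · exact good_func_aux hch hdist (x, z) hxz y hxy h


/-- A blocking pair for the matching `Good`. -/
def Blk (x y : Pt d) : Prop :=
  x ∈ L ∧ y ∈ L ∧ x ≠ y ∧ ¬ MutuallyNearest L x y ∧ ¬ Good L hch (x, y) ∧
  (∀ z, Good L hch (x, z) → dist x y < dist x z) ∧
  (∀ z, Good L hch (y, z) → dist x y < dist y z)

lemma blk_step (hdist : DistinctDist L) (a b : Pt d)
    (haL : a ∈ L) (hbL : b ∈ L) (hab : a ≠ b) (hmn : ¬ MutuallyNearest L a b)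
    (hfar : ∀ z, Good L hch (a, z) → dist a b < dist a z)
    (hside : ¬ SideC hch a b) :
    ∃ z0 z1, Blk hch z0 z1 ∧ z0 ∈ L ∧ z1 ∈ L ∧
      dist z0 z1 < dist a z0 ∧ dist a z0 < dist a b := by
  unfold SideC at hside
  push_neg at hside
  obtain ⟨z, hzL, hza, hzmn, hzlt, hzfree⟩ := hside
  set W : Set (Pt d) := {z | z ∈ L ∧ z ≠ a ∧ ¬ MutuallyNearest L a z ∧
    dist a z < dist a b ∧ ∀ w, Good L hch (z, w) → ¬ (dist z w < dist a z)} with hWdef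
  have hzW : z ∈ W := by
    refine ⟨hzL, hza, hzmn, hzlt, fun w hgw hlt => ?_⟩
    exact hzfree w (good_mem hch hgw).2.1 hlt hgw
  have hWfin : W.Finite := by
    apply (loc_fin hch a (dist a b)).subset
    rintro u ⟨huL, -, -, hub, -⟩
    exact ⟨huL, by rw [Metric.mem_closedBall, dist_comm]; exact le_of_lt hub⟩
  obtain ⟨z0, hz0W, hz0min⟩ := Set.exists_min_image W (fun u => dist a u) hWfin ⟨z, hzW⟩
  obtain ⟨hz0L, hz0a, hz0mn, hz0b, hz0free⟩ := hz0W
  have hng : ¬ Good L hch (a, z0) := fun h => absurd hz0b (not_lt.mpr (le_of_lt (hfar z0 h)))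
  have hnside : ¬ SideC hch a z0 ∨ ¬ SideC hch z0 a := by
    by_contra hc
    push_neg at hc
    exact hng ((good_iff hch a z0).mpr ⟨haL, hz0L, fun h => hz0a h.symm, hz0mn, hc.1, hc.2⟩)
  rcases hnside with hs | hs
  · exfalso
    unfold SideC at hs
    push_neg at hs
    obtain ⟨z1, hz1L, hz1a, hz1mn, hz1lt, hz1free⟩ := hs
    have hz1W : z1 ∈ W := by
      refine ⟨hz1L, hz1a, hz1mn, lt_trans hz1lt hz0b, fun w hgw hlt => ?_⟩
      exact hz1free w (good_mem hch hgw).2.1 hlt hgw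
    exact absurd (hz0min z1 hz1W) (not_le.mpr hz1lt)
  · unfold SideC at hs
    push_neg at hs
    obtain ⟨z1, hz1L, hz1z0, hz1mn, hz1lt, hz1free⟩ := hs
    -- hz1lt : dist z0 z1 < dist z0 a
    have hz1lt' : dist z0 z1 < dist a z0 := by rwa [dist_comm a z0]
    have hngz : ¬ Good L hch (z0, z1) := fun h => hz0free z1 h hz1lt'
    refine ⟨z0, z1, ⟨hz0L, hz1L, fun h => hz1z0 h.symm, hz1mn, hngz, ?_, ?_⟩,
      hz0L, hz1L, hz1lt', hz0b⟩
    · intro w hgw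
      have := hz0free w hgw
      push_neg at this
      exact lt_of_lt_of_le hz1lt' this
    · intro w hgw
      have hwmem := good_mem hch hgw
      have hle : ¬ (dist z1 w < dist z0 z1) := by
        intro hlt
        exact hz1free w hwmem.2.1 hlt hgw
      push_neg at hle
      rcases lt_or_eq_of_le hle with h | h
      · exact h
      · exfalso
        rcases hdist z1 hz1L w hwmem.2.1 z0 hz0L z1 hz1L hwmem.2.2.1
          (fun he => hz1z0 he.symm) h.symm with ⟨h1, -⟩ | ⟨-, h2⟩
        · exact hz1z0 h1
        · exact hngz (good_symm hch (h2 ▸ hgw))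

lemma good_stable (hdist : DistinctDist L) : ∀ p : Pt d × Pt d, ¬ Blk hch p.1 p.2 := by
  intro p
  induction p using (rel_wf L hch).induction with
  | _ p IH =>
  obtain ⟨x, y⟩ := p
  rintro ⟨hxL, hyL, hne, hmn, hng, hfx, hfy⟩
  have hnos : ¬ (SideC hch x y ∧ SideC hch y x) := by
    intro hs
    exact hng ((good_iff hch x y).mpr ⟨hxL, hyL, hne, hmn, hs.1, hs.2⟩)
  rcases not_and_or.mp hnos with hs | hs
  · obtain ⟨z0, z1, hblk, hz0L, hz1L, hd1, hd2⟩ :=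
      blk_step hch hdist x y hxL hyL hne hmn hfx hs
    exact IH (z0, z1) ⟨hz0L, hz1L, Or.inr ⟨x, Or.inl rfl, hd1, hd2⟩⟩ hblk
  · have hfy' : ∀ z, Good L hch (y, z) → dist y x < dist y z := by
      intro z h
      rw [dist_comm y x]
      exact hfy z h
    obtain ⟨z0, z1, hblk, hz0L, hz1L, hd1, hd2⟩ :=
      blk_step hch hdist y x hyL hxL hne.symm (fun h => hmn (mn_symm h)) hfy' hs
    have hd2' : dist y z0 < dist x y := by rwa [dist_comm y x] at hd2
    exact IH (z0, z1) ⟨hz0L, hz1L, Or.inr ⟨y, Or.inr rfl, hd1, hd2'⟩⟩ hblk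

lemma good_restricted_stable (hdist : DistinctDist L) :
    IsRestrictedStable L (fun x y => Good L hch (x, y)) := by
  rintro ⟨x, hx, y, hy, hne, hmn, hng, h6, h7⟩
  exact good_stable hch hdist (x, y) ⟨hx, hy, hne, hmn, hng, h6, h7⟩

lemma good_sub_R (hdist : DistinctDist L) (R : Pt d → Pt d → Prop)
    (hR : IsMatching L R) (hRmn : ∀ x y, R x y → ¬ MutuallyNearest L x y)
    (hst : IsRestrictedStable L R) :
    ∀ p : Pt d × Pt d, Good L hch p → R p.1 p.2 := by
  intro p
  induction p using (rel_wf L hch).induction with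
  | _ p IH =>
  obtain ⟨x, y⟩ := p
  intro hg
  by_contra hnR
  have hm := good_mem hch hg
  have hnb : ¬ ((∀ z, R x z → dist x y < dist x z) ∧ (∀ z, R y z → dist x y < dist y z)) := by
    intro hc
    exact hst ⟨x, hm.1, y, hm.2.1, hm.2.2.1, hm.2.2.2, hnR, hc.1, hc.2⟩
  rcases not_and_or.mp hnb with h | h
  · push_neg at h
    obtain ⟨z, hRxz, hle⟩ := h
    have hzmem := hR.2.1 x z hRxz
    have hzy : z ≠ y := fun he => hnR (he ▸ hRxz)
    have hlt : dist x z < dist x y := by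
      rcases lt_or_eq_of_le hle with h' | h'
      · exact h'
      · exfalso
        rcases hdist x hm.1 z hzmem.2.1 x hm.1 y hm.2.1 hzmem.2.2 hm.2.2.1 h' with
          ⟨-, h2⟩ | ⟨h1, -⟩
        · exact hzy h2
        · exact hm.2.2.1 h1
    obtain ⟨w, hwL, hdw, hgw⟩ := ((good_iff hch x y).mp hg).2.2.2.2.1 z hzmem.2.1
      hzmem.2.2.symm (hRmn x z hRxz) hlt
    have hRzw : R z w := IH (z, w) ⟨hzmem.2.1, hwL, Or.inr ⟨x, Or.inl rfl, hdw, hlt⟩⟩ hgw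
    have hRzx : R z x := hR.1 x z hRxz
    have hwx : w = x := hR.2.2 z w x hRzw hRzx
    rw [hwx, dist_comm z x] at hdw
    exact lt_irrefl _ hdw
  · push_neg at h
    obtain ⟨z, hRyz, hle⟩ := h
    have hzmem := hR.2.1 y z hRyz
    have hzx : z ≠ x := by
      intro he
      exact hnR (hR.1 y x (he ▸ hRyz))
    have hlt : dist y z < dist x y := by
      rcases lt_or_eq_of_le hle with h' | h'
      · exact h'
      · exfalso
        rcases hdist y hm.2.1 z hzmem.2.1 x hm.1 y hm.2.1 hzmem.2.2 hm.2.2.1 h' with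
          ⟨h1, -⟩ | ⟨-, h2⟩
        · exact hm.2.2.1 h1.symm
        · exact hzx h2
    have hlt' : dist y z < dist y x := by rwa [dist_comm y x]
    obtain ⟨w, hwL, hdw, hgw⟩ := ((good_iff hch x y).mp hg).2.2.2.2.2 z hzmem.2.1
      hzmem.2.2.symm (hRmn y z hRyz) hlt'
    have hRzw : R z w := IH (z, w) ⟨hzmem.2.1, hwL, Or.inr ⟨y, Or.inr rfl, hdw, hlt⟩⟩ hgw
    have hRzy : R z y := hR.1 y z hRyz
    have hwy : w = y := hR.2.2 z w y hRzw hRzy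
    rw [hwy, dist_comm z y] at hdw
    exact lt_irrefl _ hdw

lemma R_eq (hdist : DistinctDist L) (R : Pt d → Pt d → Prop)
    (hR : IsMatching L R) (hRmn : ∀ x y, R x y → ¬ MutuallyNearest L x y)
    (hst : IsRestrictedStable L R) :
    R = fun x y => Good L hch (x, y) := by
  funext x y
  apply propext
  constructor
  · intro hRxy
    by_contra hng
    have hxyL := hR.2.1 x y hRxy
    have hnmn := hRmn x y hRxy
    by_cases hc1 : ∀ z, Good L hch (x, z) → dist x y < dist x z
    · by_cases hc2 : ∀ z, Good L hch (y, z) → dist x y < dist y z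
      · exact good_stable hch hdist (x, y)
          ⟨hxyL.1, hxyL.2.1, hxyL.2.2, hnmn, hng, hc1, hc2⟩
      · push_neg at hc2
        obtain ⟨z, hgz, -⟩ := hc2
        have hRyz : R y z := good_sub_R hch hdist R hR hRmn hst (y, z) hgz
        have : z = x := hR.2.2 y z x hRyz (hR.1 x y hRxy)
        rw [this] at hgz
        exact hng (good_symm hch hgz)
    · push_neg at hc1
      obtain ⟨z, hgz, -⟩ := hc1
      have hRxz : R x z := good_sub_R hch hdist R hR hRmn hst (x, z) hgz
      have : z = y := hR.2.2 x z y hRxz hRxy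
      rw [this] at hgz
      exact hng hgz
  · intro hg
    exact good_sub_R hch hdist R hR hRmn hst (x, y) hg

/-- If two distinct points of `L` are both unmatched by a restricted-stable matching that
matches no mutually nearest pair, they are mutually nearest. -/
lemma two_free (R : Pt d → Pt d → Prop) (hst : IsRestrictedStable L R)
    {x y : Pt d} (hx : x ∈ L) (hy : y ∈ L) (hne : x ≠ y)
    (hfx : ∀ w, ¬ R x w) (hfy : ∀ w, ¬ R y w) : MutuallyNearest L x y := by
  by_contra hnmn
  exact hst ⟨x, hx, y, hy, hne, hnmn, hfx y,
    fun z h => absurd h (hfx z), fun z h => absurd h (hfy z)⟩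


end StableAux

/-- a set `L` with distinct distances and no infinite descending chains has a
unique matching that matches no mutually nearest pair and is stable subject to this
restriction; moreover this matching leaves at most two points unmatched, and if exactly
two then they are mutually nearest points of `L`. -/
theorem exists_unique_restricted_stable_matching {d : ℕ} (L : Set (Pt d))
    (hdist : DistinctDist L) (hchain : NoDescChain L) :
    (∃! R : Pt d → Pt d → Prop, IsMatching L R ∧
      (∀ x y, R x y → ¬ MutuallyNearest L x y) ∧ IsRestrictedStable L R) ∧
    ∀ R : Pt d → Pt d → Prop, IsMatching L R →
      (∀ x y, R x y → ¬ MutuallyNearest L x y) → IsRestrictedStable L R →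
      (∀ x ∈ L, ∀ y ∈ L, ∀ z ∈ L,
        (∀ w, ¬ R x w) → (∀ w, ¬ R y w) → (∀ w, ¬ R z w) → x = y ∨ x = z ∨ y = z) ∧
      (∀ x ∈ L, ∀ y ∈ L, x ≠ y →
        (∀ w, ¬ R x w) → (∀ w, ¬ R y w) → MutuallyNearest L x y) := by
  constructor
  · refine ⟨fun x y => StableAux.Good L hchain (x, y), ⟨⟨?_, ?_, ?_⟩, ?_, ?_⟩, ?_⟩
    · exact fun x y h => StableAux.good_symm hchain h
    · intro x y h
      have m := StableAux.good_mem hchain h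
      exact ⟨m.1, m.2.1, m.2.2.1⟩
    · exact fun x y z h1 h2 => StableAux.good_func hchain hdist h1 h2
    · exact fun x y h => (StableAux.good_mem hchain h).2.2.2
    · exact StableAux.good_restricted_stable hchain hdist
    · rintro R ⟨hM, hmn, hst⟩
      exact StableAux.R_eq hchain hdist R hM hmn hst
  · intro R hM hmn hst
    constructor
    · intro x hx y hy z hz hfx hfy hfz
      by_contra hc
      push_neg at hc
      obtain ⟨hxy, hxz, hyz⟩ := hc
      have m1 := StableAux.two_free R hst hx hy hxy hfx hfy
      have m2 := StableAux.two_free R hst hx hz hxz hfx hfz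
      have h1 := m1.2.2.2.1 z hz (fun he => hxz he.symm) (fun he => hyz he.symm)
      have h2 := m2.2.2.2.1 y hy (fun he => hxy he.symm) (fun he => hyz he)
      exact lt_asymm h1 h2
    · intro x hx y hy hne hfx hfy
      exact StableAux.two_free R hst hx hy hne hfx hfy
end
end

section
/- Let L ⊂ ℝ^d have distinct distances and no infinite descending chains, and let M̃ be the unique stable matching of L subject to the restriction that mutually nearest points cannot be matched. In misère friendly frogs on L, the position with two frogs at x and y is a P-position if and only if {x,y} ∈ M̃. -/
noncomputable section

open Bornology Filter Topology Classical in
lemma bounded_subset_finite {d : ℕ} (L : Set (Pt d)) (hchain : NoDescChain L)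
    (S : Set (Pt d)) (hSL : S ⊆ L) (hb : IsBounded S) : S.Finite := by
  by_contra hinf
  have hinf' : S.Infinite := hinf
  let u := hinf'.natEmbedding
  have hu : ∀ n, (u n : Pt d) ∈ S := fun n => (u n).2
  obtain ⟨p, -, φ, hφ, hconv⟩ := tendsto_subseq_of_bounded hb hu
  set w : ℕ → Pt d := (fun n => (u n : Pt d)) ∘ φ with hw
  have hwS : ∀ n, w n ∈ S := fun n => (u (φ n)).2
  have hwinj : Function.Injective w := by
    intro a b hab
    exact hφ.injective (u.injective (Subtype.ext hab))
  have key : ∀ r : ℝ, 0 < r → ∃ q ∈ S, q ≠ p ∧ dist q p < r := by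
    intro r hr
    obtain ⟨N, hN⟩ := (Metric.tendsto_atTop.mp hconv) r hr
    by_cases h : w N = p
    · refine ⟨w (N + 1), hwS _, ?_, hN _ (by omega)⟩
      intro h2; exact (by omega : N + 1 ≠ N) (hwinj (h2.trans h.symm))
    · exact ⟨w N, hwS _, h, hN _ le_rfl⟩
  have key2 : ∀ q : {q : Pt d // q ∈ S ∧ q ≠ p},
      ∃ q' : {q : Pt d // q ∈ S ∧ q ≠ p}, dist q'.1 p < dist q.1 p / 3 := by
    rintro ⟨q, hqS, hqp⟩
    have hr : 0 < dist q p / 3 := by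
      have := dist_pos.mpr hqp; linarith
    obtain ⟨q', hq'S, hq'p, hd⟩ := key _ hr
    exact ⟨⟨q', hq'S, hq'p⟩, hd⟩
  obtain ⟨q0, hq0S, hq0p, -⟩ := key 1 one_pos
  let c : ℕ → {q : Pt d // q ∈ S ∧ q ≠ p} := fun n =>
    Nat.rec ⟨q0, hq0S, hq0p⟩ (fun _ q => Classical.choose (key2 q)) n
  have hstep : ∀ n, dist (c (n + 1)).1 p < dist (c n).1 p / 3 := by
    intro n; exact Classical.choose_spec (key2 (c n))
  refine hchain ⟨fun n => (c n).1, fun n => hSL (c n).2.1, strictAnti_nat_of_succ_lt ?_⟩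
  intro n
  simp only
  set a := (c n).1; set b := (c (n + 1)).1; set e := (c (n + 2)).1
  have h1 : dist b p < dist a p / 3 := hstep n
  have h2 : dist e p < dist b p / 3 := hstep (n + 1)
  have ha : 0 < dist a p := dist_pos.mpr (c n).2.2
  have t1 : dist b e ≤ dist b p + dist p e := dist_triangle b p e
  have t2 : dist a p ≤ dist a b + dist b p := dist_triangle a b p
  have hpe : dist p e = dist e p := dist_comm p e
  linarith


lemma ffmove_wf {d : ℕ} (L : Set (Pt d)) (hchain : NoDescChain L) :
    WellFounded (fun q p : Sym2 (Pt d) => FFMove L p q) := by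
  classical
  set r : Sym2 (Pt d) → Sym2 (Pt d) → Prop := fun q p => FFMove L p q with hr
  by_contra hwf
  -- extract an infinite play
  have step : ∀ a : Sym2 (Pt d), ¬ Acc r a → ∃ b, r b a ∧ ¬ Acc r b := by
    intro a ha; by_contra hb; push_neg at hb
    exact ha (Acc.intro a hb)
  have hex : ∃ a, ¬ Acc r a := by
    by_contra h; push_neg at h; exact hwf ⟨h⟩
  obtain ⟨a0, ha0⟩ := hex
  let F : {a : Sym2 (Pt d) // ¬ Acc r a} → {a : Sym2 (Pt d) // ¬ Acc r a} := fun a =>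
    ⟨Classical.choose (step a.1 a.2), (Classical.choose_spec (step a.1 a.2)).2⟩
  let f : ℕ → {a : Sym2 (Pt d) // ¬ Acc r a} := fun n => F^[n] ⟨a0, ha0⟩
  have hf : ∀ n, FFMove L (f n).1 (f (n + 1)).1 := by
    intro n
    have h1 : f (n + 1) = F (f n) := Function.iterate_succ_apply' F n _
    rw [h1]
    exact (Classical.choose_spec (step (f n).1 (f n).2)).1
  have hf' : ∀ n, ∃ x y z, x ∈ L ∧ y ∈ L ∧ z ∈ L ∧ x ≠ y ∧ z ≠ x ∧ z ≠ y ∧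
      dist x z < dist x y ∧ (f n).1 = s(x, y) ∧ (f (n + 1)).1 = s(x, z) := hf
  choose X Y Z hXL hYL hZL hXY hZX hZY hlt hp hq using hf'
  have hrel : ∀ n, (X (n + 1) = X n ∧ Y (n + 1) = Z n) ∨ (X (n + 1) = Z n ∧ Y (n + 1) = X n) := by
    intro n
    have h : s(X (n + 1), Y (n + 1)) = s(X n, Z n) := (hp (n + 1)).symm.trans (hq n)
    rwa [Sym2.eq_iff] at h
  set D : ℕ → ℝ := fun n => dist (X n) (Y n) with hD
  have hDsucc : ∀ n, D (n + 1) < D n := by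
    intro n
    rcases hrel n with ⟨h1, h2⟩ | ⟨h1, h2⟩ <;> simp only [hD, h1, h2]
    · exact hlt n
    · rw [dist_comm]; exact hlt n
  have hDanti : StrictAnti D := strictAnti_nat_of_succ_lt hDsucc
  by_cases hT : ∀ N, ∃ n, N ≤ n ∧ X (n + 1) ≠ X n
  · -- infinitely many pivot changes
    let g : ℕ → ℕ := fun k => Nat.rec (Nat.find (hT 0)) (fun _ m => Nat.find (hT (m + 1))) k
    have hgspec : ∀ k, X (g k + 1) ≠ X (g k) := by
      intro k; cases k with
      | zero => exact (Nat.find_spec (hT 0)).2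
      | succ k => exact (Nat.find_spec (hT (g k + 1))).2
    have hg2 : ∀ k, g k + 1 ≤ g (k + 1) := fun k => (Nat.find_spec (hT (g k + 1))).1
    have hgsucc : ∀ k, g (k + 1) = Nat.find (hT (g k + 1)) := fun k => rfl
    have hgap : ∀ k j, g k < j → j < g (k + 1) → X (j + 1) = X j := by
      intro k j h1 h2
      by_contra hne
      rw [hgsucc] at h2
      exact Nat.find_min (hT (g k + 1)) h2 ⟨h1, hne⟩
    have hconst : ∀ k j, g k + 1 ≤ j → j ≤ g (k + 1) → X j = X (g k + 1) := by
      intro k j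
      induction j with
      | zero => intro h1 _; omega
      | succ j ih =>
        intro h1 h2
        rcases Nat.lt_or_ge j (g k + 1) with h | h
        · have : j + 1 = g k + 1 := by omega
          rw [this]
        · rw [hgap k j (by omega) (by omega)]
          exact ih h (by omega)
    set c : ℕ → Pt d := fun k => X (g k + 1) with hc
    have hcd : ∀ k, dist (c k) (c (k + 1)) = D (g (k + 1) + 1) := by
      intro k
      have h1 : c k = X (g (k + 1)) := (hconst k (g (k + 1)) (hg2 k) le_rfl).symm
      rcases hrel (g (k + 1)) with ⟨h2, _⟩ | ⟨_, hY⟩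
      · exact absurd h2 (hgspec (k + 1))
      · calc dist (c k) (c (k + 1)) = dist (X (g (k + 1))) (X (g (k + 1) + 1)) := by rw [h1]
          _ = dist (X (g (k + 1) + 1)) (Y (g (k + 1) + 1)) := by rw [hY, dist_comm]
          _ = D (g (k + 1) + 1) := rfl
    refine hchain ⟨c, fun k => hXL _, strictAnti_nat_of_succ_lt ?_⟩
    intro k
    show dist (c (k + 1)) (c (k + 1 + 1)) < dist (c k) (c (k + 1))
    rw [hcd k, hcd (k + 1)]
    exact hDanti (by have := hg2 (k + 1); omega)
  · -- eventually fixed pivot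
    push_neg at hT
    obtain ⟨N, hN⟩ := hT
    have hXconst : ∀ n, N ≤ n → X n = X N := by
      intro n
      induction n with
      | zero => intro h; rw [Nat.le_zero.mp h]
      | succ n ih =>
        intro h
        rcases Nat.lt_or_ge n N with h2 | h2
        · have : N = n + 1 := by omega
          rw [this]
        · rw [hN n h2]; exact ih h2
    set S : Set (Pt d) := Set.range (fun k => Y (N + k)) with hSdef
    have hSL : S ⊆ L := by rintro _ ⟨k, rfl⟩; exact hYL _
    have hda : ∀ k, dist (X N) (Y (N + k)) = D (N + k) := by
      intro k
      conv_lhs => rw [← hXconst (N + k) (by omega)]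
    have hbd : Bornology.IsBounded S := by
      apply (Metric.isBounded_closedBall (x := X N) (r := D N)).subset
      rintro _ ⟨k, rfl⟩
      simp only [Metric.mem_closedBall]
      rw [dist_comm, hda k]
      exact hDanti.antitone (by omega)
    have hinj : Function.Injective (fun k => Y (N + k)) := by
      intro j k hjk
      have : D (N + j) = D (N + k) := by
        rw [← hda j, ← hda k]; simp only at hjk; rw [hjk]
      have := hDanti.injective this
      omega
    exact Set.infinite_range_of_injective hinj (bounded_subset_finite L hchain S hSL hbd)


/-- let `L` have distinct distances and no infinite descending chains, let
`R` be its unique stable matching subject to the restriction that mutually nearest points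
cannot be matched, and let `P` be the misère P-position predicate of friendly frogs on
`L`: a terminal position is an N-position, and a nonterminal position is a P-position iff
every legal move from it leads to an N-position (this fixpoint equation determines `P`
uniquely by well-foundedness).  Then the position `{x, y}` is a P-position if and only if
`x` and `y` are matched in `R`. -/
theorem misere_ppositions_eq_restricted_matching {d : ℕ} (L : Set (Pt d))
    (hdist : DistinctDist L) (hchain : NoDescChain L)
    (R : Pt d → Pt d → Prop) (hM : IsMatching L R)
    (hres : ∀ x y, R x y → ¬ MutuallyNearest L x y) (hS : IsRestrictedStable L R)
    (P : Sym2 (Pt d) → Prop)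
    (hP : ∀ x ∈ L, ∀ y ∈ L, x ≠ y →
      (P s(x, y) ↔ (∃ q, FFMove L s(x, y) q) ∧ ∀ q, FFMove L s(x, y) q → ¬ P q)) :
    ∀ x ∈ L, ∀ y ∈ L, x ≠ y → (P s(x, y) ↔ R x y) := by
  obtain ⟨hsymm, hmem, huniq⟩ := hM
  have hdd : ∀ x ∈ L, ∀ y ∈ L, ∀ z ∈ L, x ≠ y → z ≠ x → z ≠ y → dist x z ≠ dist x y := by
    intro x hx y hy z hz hxy hzx hzy heq
    rcases hdist x hx z hz x hx y hy (Ne.symm hzx) hxy heq with ⟨-, h⟩ | ⟨h, -⟩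
    · exact hzy h
    · exact hxy h
  have wf := ffmove_wf L hchain
  have main : ∀ p : Sym2 (Pt d),
      ∀ x, x ∈ L → ∀ y, y ∈ L → x ≠ y → p = s(x, y) → (P p ↔ R x y) := by
    refine fun p => WellFounded.induction wf
      (C := fun p => ∀ x, x ∈ L → ∀ y, y ∈ L → x ≠ y → p = s(x, y) → (P p ↔ R x y)) p ?_
    intro p IH x hx y hy hxy hpxy
    subst hpxy
    constructor
    · -- P → R
      intro hPp
      by_contra hnR
      by_cases hMN : MutuallyNearest L x y
      · -- mutually nearest and unmatched: terminal position, so an N-position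
        obtain ⟨⟨q, hq⟩, -⟩ := (hP x hx y hy hxy).mp hPp
        obtain ⟨a, b, z, haL, hbL, hzL, hab, hza, hzb, hlt, hpe, hqe⟩ := hq
        obtain ⟨-, -, -, hA, hB⟩ := hMN
        rcases Sym2.eq_iff.mp hpe with ⟨ha, hb⟩ | ⟨ha, hb⟩
        · subst ha; subst hb
          exact absurd hlt (not_lt.mpr (le_of_lt (hA z hzL hza hzb)))
        · subst ha; subst hb
          have h2 := hB z hzL hzb hza
          rw [dist_comm y x] at hlt
          linarith
      · -- not mutually nearest: stability provides a matched strictly closer neighbour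
        have hfail : ¬ ((∀ z, R x z → dist x y < dist x z) ∧
            (∀ z, R y z → dist x y < dist y z)) := by
          rintro ⟨h1, h2⟩
          exact hS ⟨x, hx, y, hy, hxy, hMN, hnR, h1, h2⟩
        rw [not_and_or] at hfail
        rcases hfail with h | h
        · push_neg at h
          obtain ⟨z, hRz, hle⟩ := h
          obtain ⟨-, hzL, hxz⟩ := hmem x z hRz
          have hzy : z ≠ y := fun h => hnR (h ▸ hRz)
          have hlt : dist x z < dist x y :=
            lt_of_le_of_ne hle (hdd x hx y hy z hzL hxy (Ne.symm hxz) hzy)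
          have hmv : FFMove L s(x, y) s(x, z) :=
            ⟨x, y, z, hx, hy, hzL, hxy, Ne.symm hxz, hzy, hlt, rfl, rfl⟩
          have hPq : P s(x, z) := (IH _ hmv x hx z hzL hxz rfl).mpr hRz
          exact ((hP x hx y hy hxy).mp hPp).2 _ hmv hPq
        · push_neg at h
          obtain ⟨z, hRz, hle⟩ := h
          obtain ⟨-, hzL, hyz⟩ := hmem y z hRz
          have hzx : z ≠ x := fun h => hnR (hsymm _ _ (h ▸ hRz))
          have hne : dist y z ≠ dist x y := by
            have := hdd y hy x hx z hzL (Ne.symm hxy) (Ne.symm hyz) hzx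
            rwa [dist_comm y x] at this
          have hlt : dist y z < dist x y := lt_of_le_of_ne hle hne
          have hmv : FFMove L s(x, y) s(y, z) :=
            ⟨y, x, z, hy, hx, hzL, Ne.symm hxy, Ne.symm hyz, hzx,
              (by rw [dist_comm y x]; exact hlt), Sym2.eq_swap, rfl⟩
          have hPq : P s(y, z) := (IH _ hmv y hy z hzL hyz rfl).mpr hRz
          exact ((hP x hx y hy hxy).mp hPp).2 _ hmv hPq
    · -- R → P
      intro hRxy
      have hMN := hres x y hRxy
      have hexz : ∃ z ∈ L, z ≠ x ∧ z ≠ y ∧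
          (dist x z < dist x y ∨ dist y z < dist x y) := by
        by_cases hA : ∀ z ∈ L, z ≠ x → z ≠ y → dist x y < dist x z
        · have hB : ¬ ∀ z ∈ L, z ≠ x → z ≠ y → dist x y < dist y z := by
            intro hB; exact hMN ⟨hx, hy, hxy, hA, hB⟩
          push_neg at hB
          obtain ⟨z, hzL, hzx, hzy, hle⟩ := hB
          have hne : dist y z ≠ dist x y := by
            have := hdd y hy x hx z hzL (Ne.symm hxy) hzy hzx
            rwa [dist_comm y x] at this
          exact ⟨z, hzL, hzx, hzy, Or.inr (lt_of_le_of_ne hle hne)⟩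
        · push_neg at hA
          obtain ⟨z, hzL, hzx, hzy, hle⟩ := hA
          exact ⟨z, hzL, hzx, hzy,
            Or.inl (lt_of_le_of_ne hle (hdd x hx y hy z hzL hxy hzx hzy))⟩
      refine (hP x hx y hy hxy).mpr ⟨?_, ?_⟩
      · obtain ⟨z, hzL, hzx, hzy, hcase⟩ := hexz
        rcases hcase with h | h
        · exact ⟨s(x, z), x, y, z, hx, hy, hzL, hxy, hzx, hzy, h, rfl, rfl⟩
        · exact ⟨s(y, z), y, x, z, hy, hx, hzL, Ne.symm hxy, hzy, hzx,
            (by rw [dist_comm y x]; exact h), Sym2.eq_swap, rfl⟩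
      · intro q hq
        obtain ⟨a, b, z, haL, hbL, hzL, hab, hza, hzb, hlt, hpe, hqe⟩ := hq
        subst hqe
        rcases Sym2.eq_iff.mp hpe with ⟨ha, hb⟩ | ⟨ha, hb⟩
        · subst ha; subst hb
          intro hPq
          have hmv : FFMove L s(x, y) s(x, z) :=
            ⟨x, y, z, hx, hy, hzL, hxy, hza, hzb, hlt, rfl, rfl⟩
          have hRxz : R x z := (IH _ hmv x hx z hzL (Ne.symm hza) rfl).mp hPq
          exact hzb (huniq x y z hRxy hRxz).symm
        · subst ha; subst hb
          intro hPq
          have hmv : FFMove L s(x, y) s(y, z) :=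
            ⟨y, x, z, hy, hx, hzL, hab, hza, hzb, hlt, Sym2.eq_swap, rfl⟩
          have hRyz : R y z := (IH _ hmv y hy z hzL (Ne.symm hza) rfl).mp hPq
          exact hzb (huniq y x z (hsymm x y hRxy) hRyz).symm
  intro x hx y hy hxy
  exact main s(x, y) x hx y hy hxy rfl
end
end
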